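/- arXiv:2506.09285 — 9 statements merged into one kernel-verified Lean document; each statement's English description precedes it below -/
import Mathlib

section
/- Let R and A be rings such that A is a left R-module, let n ≥ 1, and equip the matrix ring M_n(A) with the entrywise left R-module structure. If M_n(A) is Dixmier with respect to R, then A is Dixmier with respect to R; likewise, if M_n(A) is weakly Dixmier with respect to R, then A is weakly Dixmier with respect to R. -/
/-- If the matrix ring `Mₙ(A)` (with its entrywise left `R`-module
structure) is Dixmier (resp. weakly Dixmier) with respect to `R`, then so is `A`. -/
theorem matrix_dixmier_implies_dixmier (R A : Type*) [Ring R] [Ring A] [Module R A]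
    (n : ℕ) (hn : 1 ≤ n) :
    ((∀ Φ : Matrix (Fin n) (Fin n) A →+* Matrix (Fin n) (Fin n) A,
        (∀ (r : R) (M : Matrix (Fin n) (Fin n) A), Φ (r • M) = r • Φ M) →
        Function.Bijective Φ) →
      (∀ φ : A →+* A, (∀ (r : R) (a : A), φ (r • a) = r • φ a) →
        Function.Bijective φ)) ∧
    ((∀ Φ : Matrix (Fin n) (Fin n) A →+* Matrix (Fin n) (Fin n) A,
        (∀ (r : R) (M : Matrix (Fin n) (Fin n) A), Φ (r • M) = r • Φ M) →
        Function.Injective Φ → Function.Bijective Φ) →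
      (∀ φ : A →+* A, (∀ (r : R) (a : A), φ (r • a) = r • φ a) →
        Function.Injective φ → Function.Bijective φ)) := by
  have i0 : Fin n := ⟨0, hn⟩
  -- entrywise lift is R-linear
  have hlin : ∀ (φ : A →+* A), (∀ (r : R) (a : A), φ (r • a) = r • φ a) →
      ∀ (r : R) (M : Matrix (Fin n) (Fin n) A),
        φ.mapMatrix (r • M) = r • φ.mapMatrix M := by
    intro φ hφ r M
    ext i j
    simp [Matrix.map_apply, hφ]
  -- transfer of bijectivity from the lift back to φ
  have key : ∀ (φ : A →+* A), Function.Bijective (φ.mapMatrix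
      (m := Fin n)) → Function.Bijective φ := by
    intro φ hΦ
    constructor
    · intro a b hab
      have : φ.mapMatrix (m := Fin n) (Matrix.of fun _ _ => a) =
          φ.mapMatrix (Matrix.of fun _ _ => b) := by
        ext i j
        simpa [Matrix.map_apply] using hab
      have := Matrix.ext_iff.mpr (hΦ.1 this) i0 i0
      simpa using this
    · intro b
      obtain ⟨M, hM⟩ := hΦ.2 (Matrix.of fun _ _ => b)
      refine ⟨M i0 i0, ?_⟩
      have := Matrix.ext_iff.mpr hM i0 i0
      simpa [Matrix.map_apply] using this
  constructor
  · intro H φ hφ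
    exact key φ (H _ (hlin φ hφ))
  · intro H φ hφ hinj
    refine key φ (H _ (hlin φ hφ) ?_)
    intro M N hMN
    ext i j
    exact hinj (Matrix.ext_iff.mpr hMN i j)
end

section
/- Let R, A and B be rings such that A and B are left R-modules, and equip the product ring A × B with the componentwise left R-module structure. If A × B is Dixmier with respect to R, then both A and B are Dixmier with respect to R; likewise, if A × B is weakly Dixmier with respect to R, then both A and B are weakly Dixmier with respect to R. -/
private lemma extA {R A B : Type*} [Ring R] [Ring A] [Ring B] [Module R A] [Module R B]
    (φ : A →+* A) (h : ∀ (r : R) (a : A), φ (r • a) = r • φ a) (r : R) (x : A × B) :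
    (φ.prodMap (RingHom.id B)) (r • x) = r • (φ.prodMap (RingHom.id B)) x := by
  cases x with
  | mk a b => simp [RingHom.prodMap, Prod.smul_mk, h]

private lemma extB {R A B : Type*} [Ring R] [Ring A] [Ring B] [Module R A] [Module R B]
    (ψ : B →+* B) (h : ∀ (r : R) (b : B), ψ (r • b) = r • ψ b) (r : R) (x : A × B) :
    ((RingHom.id A).prodMap ψ) (r • x) = r • ((RingHom.id A).prodMap ψ) x := by
  cases x with
  | mk a b => simp [RingHom.prodMap, Prod.smul_mk, h]

/-- If the product ring `A × B` (with componentwise left `R`-module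
structure) is Dixmier (resp. weakly Dixmier) with respect to `R`, then so are both
factors `A` and `B`. -/
theorem prod_dixmier_implies_dixmier (R A B : Type*) [Ring R] [Ring A] [Ring B]
    [Module R A] [Module R B] :
    ((∀ Φ : A × B →+* A × B, (∀ (r : R) (x : A × B), Φ (r • x) = r • Φ x) →
        Function.Bijective Φ) →
      ((∀ φ : A →+* A, (∀ (r : R) (a : A), φ (r • a) = r • φ a) →
          Function.Bijective φ) ∧
       (∀ ψ : B →+* B, (∀ (r : R) (b : B), ψ (r • b) = r • ψ b) →
          Function.Bijective ψ))) ∧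
    ((∀ Φ : A × B →+* A × B, (∀ (r : R) (x : A × B), Φ (r • x) = r • Φ x) →
        Function.Injective Φ → Function.Bijective Φ) →
      ((∀ φ : A →+* A, (∀ (r : R) (a : A), φ (r • a) = r • φ a) →
          Function.Injective φ → Function.Bijective φ) ∧
       (∀ ψ : B →+* B, (∀ (r : R) (b : B), ψ (r • b) = r • ψ b) →
          Function.Injective ψ → Function.Bijective ψ))) := by
  constructor
  · intro H
    constructor
    · intro φ h
      have := H (φ.prodMap (RingHom.id B)) (extA φ h)
      have : Function.Bijective (Prod.map φ (id : B → B)) := this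
      exact ((Prod.map_bijective).mp this).1
    · intro ψ h
      have := H ((RingHom.id A).prodMap ψ) (extB ψ h)
      have : Function.Bijective (Prod.map (id : A → A) ψ) := this
      exact ((Prod.map_bijective).mp this).2
  · intro H
    constructor
    · intro φ h hinj
      have hinj' : Function.Injective (Prod.map φ (id : B → B)) :=
        hinj.prodMap Function.injective_id
      have := H (φ.prodMap (RingHom.id B)) (extA φ h) hinj'
      have : Function.Bijective (Prod.map φ (id : B → B)) := this
      exact ((Prod.map_bijective).mp this).1
    · intro ψ h hinj
      have hinj' : Function.Injective (Prod.map (id : A → A) ψ) :=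
        Function.injective_id.prodMap hinj
      have := H ((RingHom.id A).prodMap ψ) (extB ψ h) hinj'
      have : Function.Bijective (Prod.map (id : A → A) ψ) := this
      exact ((Prod.map_bijective).mp this).2
end

section
/- Let Z be a commutative domain and let A and B be associative unital Z-algebras that are free as Z-modules, admitting a Z-basis X of A with 1_A ∈ X and a Z-basis Y of B with 1_B ∈ Y. If every Z-algebra endomorphism of the tensor product algebra A ⊗_Z B is bijective, then every Z-algebra endomorphism of A is bijective and every Z-algebra endomorphism of B is bijective. -/
open scoped TensorProduct

theorem aux_dixmier (Z : Type*) [CommRing Z]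
    (A B : Type*) [Ring A] [Algebra Z A] [Ring B] [Algebra Z B]
    (ιB : Type*) (XB : Module.Basis ιB Z B) (iB : ιB) (hXB : XB iB = 1)
    (hD : ∀ Φ : A ⊗[Z] B →ₐ[Z] A ⊗[Z] B, Function.Bijective Φ) :
    ∀ φ : A →ₐ[Z] A, Function.Bijective φ := by
  intro φ
  haveI := Classical.decEq ιB
  set e : A ⊗[Z] B ≃ₗ[Z] (ιB →₀ A) :=
    (LinearEquiv.lTensor A XB.repr).trans (TensorProduct.finsuppScalarRight Z Z A ιB) with he
  have ecalc : ∀ (a : A) (b : B),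
      e (a ⊗ₜ[Z] b) = (XB.repr b).sum fun j z => Finsupp.single j (z • a) := by
    intro a b
    simp [he, TensorProduct.finsuppScalarRight_apply_tmul]
  have key : ∀ (a : A) (j : ιB), e (a ⊗ₜ[Z] XB j) = Finsupp.single j a := by
    intro a j
    rw [ecalc, XB.repr_self, Finsupp.sum_single_index] <;> simp
  set Φ : A ⊗[Z] B →ₐ[Z] A ⊗[Z] B := Algebra.TensorProduct.map φ (AlgHom.id Z B) with hΦ
  have hbij := hD Φ
  have comm : ∀ t : A ⊗[Z] B,
      e (Φ t) = Finsupp.mapRange.linearMap (φ.toLinearMap) (e t) := by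
    intro t
    induction t using TensorProduct.induction_on with
    | zero => simp
    | tmul a b =>
      rw [hΦ, Algebra.TensorProduct.map_tmul, AlgHom.coe_id, id_eq, ecalc, ecalc]
      rw [map_finsuppSum]
      refine Finsupp.sum_congr fun j _ => ?_
      rw [Finsupp.mapRange.linearMap_apply, Finsupp.mapRange_single, map_smul]
      rfl
    | add x y hx hy => simp [map_add, hx, hy]
  constructor
  · rw [injective_iff_map_eq_zero]
    intro a ha
    have h1 : Φ (a ⊗ₜ[Z] 1) = 0 := by
      simp [hΦ, ha]
    have h2 : a ⊗ₜ[Z] (1 : B) = 0 := by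
      have := hbij.injective (h1.trans (map_zero Φ).symm)
      simpa using this
    have := key a iB
    rw [hXB, h2, map_zero] at this
    exact (Finsupp.single_eq_zero.mp this.symm)
  · intro a
    obtain ⟨t, ht⟩ := hbij.surjective (a ⊗ₜ[Z] 1)
    refine ⟨(e t) iB, ?_⟩
    have h1 : e (Φ t) = Finsupp.single iB a := by rw [ht, ← hXB, key]
    rw [comm t] at h1
    have := congrArg (fun f => f iB) h1
    simpa using this

/-- Let `Z` be a commutative domain and `A`, `B` associative unital
`Z`-algebras that are free `Z`-modules with bases containing the respective identities.
If every `Z`-algebra endomorphism of `A ⊗[Z] B` is bijective, then every `Z`-algebra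
endomorphism of `A` is bijective and every `Z`-algebra endomorphism of `B` is bijective. -/
theorem tensor_dixmier_implies_dixmier (Z : Type*) [CommRing Z] [IsDomain Z]
    (A B : Type*) [Ring A] [Algebra Z A] [Ring B] [Algebra Z B]
    (ιA : Type*) (XA : Module.Basis ιA Z A) (iA : ιA) (hXA : XA iA = 1)
    (ιB : Type*) (XB : Module.Basis ιB Z B) (iB : ιB) (hXB : XB iB = 1)
    (hD : ∀ Φ : A ⊗[Z] B →ₐ[Z] A ⊗[Z] B, Function.Bijective Φ) :
    (∀ φ : A →ₐ[Z] A, Function.Bijective φ) ∧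
    (∀ ψ : B →ₐ[Z] B, Function.Bijective ψ) := by
  refine ⟨aux_dixmier Z A B ιB XB iB hXB hD, aux_dixmier Z B A ιA XA iA hXA ?_⟩
  intro Φ
  let c := Algebra.TensorProduct.comm Z A B
  have h := hD ((c.symm.toAlgHom.comp Φ).comp c.toAlgHom)
  have heq : ⇑Φ = ⇑c ∘ ⇑((c.symm.toAlgHom.comp Φ).comp c.toAlgHom) ∘ ⇑c.symm := by
    funext x; simp [c]
  rw [heq]
  exact c.bijective.comp (h.comp c.symm.bijective)
end

section
/- Let K be a field and let A and B be simple K-algebras such that the center of A equals K·1 or the center of B equals K·1. Assume that every K-algebra endomorphism of A is bijective and every K-algebra endomorphism of B is bijective. If Φ is a K-algebra endomorphism of A ⊗_K B such that Φ(A ⊗ 1) ⊆ A ⊗ 1 and Φ(1 ⊗ B) ⊆ 1 ⊗ B, then Φ is bijective. -/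
open scoped TensorProduct

/-- Let `K` be a field and `A`, `B` simple `K`-algebras with the center
of `A` equal to `K·1` or the center of `B` equal to `K·1`.  Suppose every `K`-algebra
endomorphism of `A` is bijective and every `K`-algebra endomorphism of `B` is bijective.
If `Φ` is a `K`-algebra endomorphism of `A ⊗[K] B` with `Φ(A ⊗ 1) ⊆ A ⊗ 1` and
`Φ(1 ⊗ B) ⊆ 1 ⊗ B`, then `Φ` is bijective. -/
theorem tensor_endo_bijective_of_dixmier_factors (K A B : Type*) [Field K]
    [Ring A] [Algebra K A] [Ring B] [Algebra K B]
    (hsA : ∀ I : TwoSidedIdeal A, I = ⊥ ∨ I = ⊤)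
    (hsB : ∀ I : TwoSidedIdeal B, I = ⊥ ∨ I = ⊤)
    (hcenter : Subalgebra.center K A = ⊥ ∨ Subalgebra.center K B = ⊥)
    (hDA : ∀ φ : A →ₐ[K] A, Function.Bijective φ)
    (hDB : ∀ ψ : B →ₐ[K] B, Function.Bijective ψ)
    (Φ : A ⊗[K] B →ₐ[K] A ⊗[K] B)
    (hL : ∀ a : A, ∃ a' : A, Φ (a ⊗ₜ[K] (1 : B)) = a' ⊗ₜ[K] (1 : B))
    (hR : ∀ b : B, ∃ b' : B, Φ ((1 : A) ⊗ₜ[K] b) = (1 : A) ⊗ₜ[K] b') :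
    Function.Bijective Φ := by
  by_cases hT : Subsingleton (A ⊗[K] B)
  · exact ⟨fun x y _ => Subsingleton.elim x y, fun y => ⟨y, Subsingleton.elim _ _⟩⟩
  have hnt : Nontrivial (A ⊗[K] B) := not_subsingleton_iff_nontrivial.mp hT
  have hA1 : (1 : A) ≠ 0 := by
    intro h
    apply one_ne_zero (α := A ⊗[K] B)
    rw [Algebra.TensorProduct.one_def, h, TensorProduct.zero_tmul]
  have hB1 : (1 : B) ≠ 0 := by
    intro h
    apply one_ne_zero (α := A ⊗[K] B)
    rw [Algebra.TensorProduct.one_def, h, TensorProduct.tmul_zero]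
  obtain ⟨gB, hgB⟩ := (LinearMap.toSpanSingleton K B 1).exists_leftInverse_of_injective
    (LinearMap.ker_toSpanSingleton (R := K) hB1)
  have hgB1 : gB 1 = 1 := by simpa using LinearMap.congr_fun hgB 1
  obtain ⟨gA, hgA⟩ := (LinearMap.toSpanSingleton K A 1).exists_leftInverse_of_injective
    (LinearMap.ker_toSpanSingleton (R := K) hA1)
  have hgA1 : gA 1 = 1 := by simpa using LinearMap.congr_fun hgA 1
  have injL : ∀ a a' : A, a ⊗ₜ[K] (1 : B) = a' ⊗ₜ[K] (1 : B) → a = a' := by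
    intro a a' h
    have := congrArg (fun x => (TensorProduct.rid K A) (LinearMap.lTensor A gB x)) h
    simpa [hgB1] using this
  have injR : ∀ b b' : B, (1 : A) ⊗ₜ[K] b = (1 : A) ⊗ₜ[K] b' → b = b' := by
    intro b b' h
    have := congrArg (fun x => (TensorProduct.lid K B) (LinearMap.rTensor B gA x)) h
    simpa [hgA1] using this
  -- the induced endomorphism of A
  set f : A → A := fun a => (hL a).choose with hf
  have hfs : ∀ a : A, Φ (a ⊗ₜ[K] (1 : B)) = f a ⊗ₜ[K] (1 : B) := fun a => (hL a).choose_spec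
  set g : B → B := fun b => (hR b).choose with hg
  have hgs : ∀ b : B, Φ ((1 : A) ⊗ₜ[K] b) = (1 : A) ⊗ₜ[K] g b := fun b => (hR b).choose_spec
  have f_one : f 1 = 1 := by
    apply injL
    rw [← hfs, ← Algebra.TensorProduct.one_def, map_one, Algebra.TensorProduct.one_def]
  have f_mul : ∀ a a' : A, f (a * a') = f a * f a' := by
    intro a a'
    apply injL
    have : ((a * a') ⊗ₜ[K] (1 : B)) = (a ⊗ₜ[K] (1 : B)) * (a' ⊗ₜ[K] (1 : B)) := by
      rw [Algebra.TensorProduct.tmul_mul_tmul, one_mul]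
    rw [← hfs, this, map_mul, hfs, hfs, Algebra.TensorProduct.tmul_mul_tmul, one_mul]
  have f_zero : f 0 = 0 := by
    apply injL
    rw [← hfs, TensorProduct.zero_tmul, map_zero]
  have f_add : ∀ a a' : A, f (a + a') = f a + f a' := by
    intro a a'
    apply injL
    rw [← hfs, TensorProduct.add_tmul, map_add, hfs, hfs, TensorProduct.add_tmul]
  have f_smul : ∀ (c : K) (a : A), f (c • a) = c • f a := by
    intro c a
    apply injL
    rw [← hfs, ← TensorProduct.smul_tmul', map_smul, hfs, TensorProduct.smul_tmul']
  let φ : A →ₐ[K] A := AlgHom.mk'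
    { toFun := f, map_one' := f_one, map_mul' := f_mul,
      map_zero' := f_zero, map_add' := f_add } f_smul
  have g_one : g 1 = 1 := by
    apply injR
    rw [← hgs, ← Algebra.TensorProduct.one_def, map_one, Algebra.TensorProduct.one_def]
  have g_mul : ∀ b b' : B, g (b * b') = g b * g b' := by
    intro b b'
    apply injR
    have : ((1 : A) ⊗ₜ[K] (b * b')) = ((1 : A) ⊗ₜ[K] b) * ((1 : A) ⊗ₜ[K] b') := by
      rw [Algebra.TensorProduct.tmul_mul_tmul, one_mul]
    rw [← hgs, this, map_mul, hgs, hgs, Algebra.TensorProduct.tmul_mul_tmul, one_mul]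
  have g_zero : g 0 = 0 := by
    apply injR
    rw [← hgs, TensorProduct.tmul_zero, map_zero]
  have g_add : ∀ b b' : B, g (b + b') = g b + g b' := by
    intro b b'
    apply injR
    rw [← hgs, TensorProduct.tmul_add, map_add, hgs, hgs, TensorProduct.tmul_add]
  have g_smul : ∀ (c : K) (b : B), g (c • b) = c • g b := by
    intro c b
    apply injR
    rw [← hgs, TensorProduct.tmul_smul, map_smul, hgs, TensorProduct.tmul_smul]
  let ψ : B →ₐ[K] B := AlgHom.mk'
    { toFun := g, map_one' := g_one, map_mul' := g_mul,
      map_zero' := g_zero, map_add' := g_add } g_smul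
  let e : (A ⊗[K] B) ≃ₐ[K] (A ⊗[K] B) :=
    Algebra.TensorProduct.congr (AlgEquiv.ofBijective φ (hDA φ))
      (AlgEquiv.ofBijective ψ (hDB ψ))
  have key : ∀ x, Φ x = e x := by
    intro x
    induction x using TensorProduct.induction_on with
    | zero => simp
    | tmul a b =>
        have h1 : (a ⊗ₜ[K] b) = (a ⊗ₜ[K] (1 : B)) * ((1 : A) ⊗ₜ[K] b) := by
          rw [Algebra.TensorProduct.tmul_mul_tmul, one_mul, mul_one]
        rw [h1, map_mul, hfs, hgs]
        have h2 : e (a ⊗ₜ[K] (1 : B) * (1 : A) ⊗ₜ[K] b) = f a ⊗ₜ[K] g b := by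
          simp only [e, map_mul, Algebra.TensorProduct.congr_apply]
          rw [Algebra.TensorProduct.map_tmul, Algebra.TensorProduct.map_tmul,
            Algebra.TensorProduct.tmul_mul_tmul]
          simp [φ, ψ, f_one, g_one]
        rw [h2, Algebra.TensorProduct.tmul_mul_tmul, one_mul, mul_one]
    | add x y hx hy => rw [map_add, map_add, hx, hy]
  have : ⇑Φ = ⇑e := funext key
  rw [this]
  exact e.bijective
end

section
/- The algebra 𝒞𝒮𝒟_n(K) is a left and right Noetherian domain, and its units are exactly the nonzero scalars: an element u ∈ 𝒞𝒮𝒟_n(K) is invertible if and only if u = c·1 for some c ∈ K \ {0}. -/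
/-- The defining relations of the algebra `𝒞𝒮𝒟ₙ(K)`:
`xⱼ xᵢ = xᵢ xⱼ + dᵢⱼ` for `i < j`. -/
def csdRel (K : Type*) [Field K] {n : ℕ} (d : Fin n → Fin n → K) :
    FreeAlgebra K (Fin n) → FreeAlgebra K (Fin n) → Prop := fun a b =>
  ∃ i j : Fin n, i < j ∧
    a = FreeAlgebra.ι K j * FreeAlgebra.ι K i ∧
    b = FreeAlgebra.ι K i * FreeAlgebra.ι K j +
      algebraMap K (FreeAlgebra K (Fin n)) (d i j)

/-- The algebra `𝒞𝒮𝒟ₙ(K)`: the quotient of the free algebra on `x₁, …, xₙ` by the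
two-sided ideal generated by the relations `xⱼ xᵢ − xᵢ xⱼ − dᵢⱼ` for `i < j`. -/
abbrev CSD (K : Type*) [Field K] {n : ℕ} (d : Fin n → Fin n → K) : Type _ :=
  RingQuot (csdRel K d)

namespace CSDproof

open Finsupp MvPolynomial

variable {K : Type*} [Field K] {n : ℕ} (d : Fin n → Fin n → K)

/-- The generators of `CSD`. -/
noncomputable def Xg (i : Fin n) : CSD K d :=
  RingQuot.mkAlgHom K (csdRel K d) (FreeAlgebra.ι K i)

lemma Xg_rel {i j : Fin n} (h : i < j) :
    Xg d j * Xg d i = Xg d i * Xg d j + algebraMap K (CSD K d) (d i j) := by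
  have := RingQuot.mkAlgHom_rel K (s := csdRel K d)
    (⟨i, j, h, rfl, rfl⟩ : csdRel K d _ _)
  simpa only [Xg, map_mul, map_add, AlgHom.commutes] using this

/-- degree helpers -/
lemma dg_add (a b : Fin n →₀ ℕ) : (a + b).degree = a.degree + b.degree := by
  classical
  simp only [Finsupp.degree_eq_weight_one]
  exact map_add _ a b

lemma dg_single (k : Fin n) (m : ℕ) : (Finsupp.single k m).degree = m := by
  classical
  rcases eq_or_ne m 0 with rfl | hm
  · simp [Finsupp.degree]
  · rw [Finsupp.degree_single]

lemma sub_single_add {γ : Fin n →₀ ℕ} {k : Fin n} (h : γ k ≠ 0) :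
    γ - Finsupp.single k 1 + Finsupp.single k 1 = γ := by
  classical
  ext l
  rcases eq_or_ne l k with rfl | hl
  · simp [Finsupp.sub_apply, Nat.sub_add_cancel (Nat.one_le_iff_ne_zero.2 h)]
  · simp [Finsupp.sub_apply, Finsupp.single_apply, (Ne.symm hl)]

lemma dg_sub_single_lt {γ : Fin n →₀ ℕ} {k : Fin n} (h : γ k ≠ 0) :
    (γ - Finsupp.single k 1).degree < γ.degree := by
  classical
  conv_rhs => rw [← sub_single_add h]
  rw [dg_add, dg_single]
  omega

/-- The normally ordered monomial `x^γ` in `CSD`. -/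
noncomputable def W (γ : Fin n →₀ ℕ) : CSD K d :=
  if h : γ = 0 then 1
  else
    Xg d (γ.support.min' (Finsupp.support_nonempty_iff.mpr h)) *
      W (γ - Finsupp.single (γ.support.min' (Finsupp.support_nonempty_iff.mpr h)) 1)
termination_by γ.degree
decreasing_by
  exact dg_sub_single_lt (Finsupp.mem_support_iff.mp
    (γ.support.min'_mem (Finsupp.support_nonempty_iff.mpr h)))

lemma W_zero : W d 0 = 1 := by rw [W]; simp

lemma W_pos {γ : Fin n →₀ ℕ} (h : γ ≠ 0) :
    W d γ = Xg d (γ.support.min' (Finsupp.support_nonempty_iff.mpr h)) *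
      W d (γ - Finsupp.single (γ.support.min' (Finsupp.support_nonempty_iff.mpr h)) 1) := by
  rw [W]; simp [h]

lemma Xg_mul_W {k : Fin n} {γ : Fin n →₀ ℕ} (hk : ∀ l ∈ γ.support, k ≤ l) :
    Xg d k * W d γ = W d (γ + Finsupp.single k 1) := by
  classical
  set δ := γ + Finsupp.single k 1 with hδ
  have hδk : δ k ≠ 0 := by simp [hδ]
  have hδ0 : δ ≠ 0 := fun h0 => hδk (by simp [h0])
  have hmem : k ∈ δ.support := Finsupp.mem_support_iff.2 hδk
  have hmin : δ.support.min' (Finsupp.support_nonempty_iff.mpr hδ0) = k := by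
    refine le_antisymm (Finset.min'_le _ _ hmem) (Finset.le_min' _ _ _ ?_)
    intro y hy
    rcases Finsupp.mem_support_iff.1 hy with hy'
    by_contra hlt
    push_neg at hlt
    have : γ y = 0 := by
      by_contra h'
      exact absurd (hk y (Finsupp.mem_support_iff.2 h')) (not_le.2 hlt)
    apply hy'
    simp only [hδ, Finsupp.add_apply, this, Finsupp.single_apply, zero_add]
    rw [if_neg (by exact fun h => absurd h (ne_of_gt hlt))]
  have hsub : δ - Finsupp.single k 1 = γ := by
    ext l
    rcases eq_or_ne l k with rfl | hl
    · simp [hδ]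
    · simp [hδ, Finsupp.single_apply, (Ne.symm hl), Finsupp.sub_apply]
  rw [W_pos d hδ0]
  rw [hmin, hsub]


noncomputable def Aop (i : Fin n) : Module.End K (MvPolynomial (Fin n) K) :=
  LinearMap.mulLeft K (X i)

noncomputable def Dop (k : Fin n) : Module.End K (MvPolynomial (Fin n) K) :=
  (pderiv k).toLinearMap

lemma DA (k i : Fin n) :
    Dop (K := K) k * Aop i = Aop i * Dop k + (if k = i then 1 else 0) := by
  classical
  refine LinearMap.ext fun p => ?_
  simp only [Module.End.mul_apply, LinearMap.add_apply, Aop, Dop, LinearMap.mulLeft_apply,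
    Derivation.coeFn_coe]
  rw [pderiv_mul]
  rcases eq_or_ne k i with rfl | h
  · simp [add_comm]
  · simp [pderiv_X_of_ne (Ne.symm h), h]

lemma DD (k l : Fin n) : Dop (K := K) k * Dop l = Dop l * Dop k := by
  classical
  refine LinearMap.ext fun p => ?_
  simp only [Module.End.mul_apply, Dop, Derivation.coeFn_coe]
  induction p using MvPolynomial.induction_on' with
  | monomial s a =>
      simp only [pderiv_monomial]
      rcases eq_or_ne k l with rfl | h
      · rfl
      · have h1 : ((s - Finsupp.single l 1) : Fin n →₀ ℕ) k = s k := by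
          simp [Finsupp.sub_apply, Finsupp.single_apply, Ne.symm h]
        have h2 : ((s - Finsupp.single k 1) : Fin n →₀ ℕ) l = s l := by
          simp [Finsupp.sub_apply, Finsupp.single_apply, h]
        simp only [pderiv_monomial, h1, h2]
        rw [tsub_tsub, tsub_tsub, add_comm, mul_right_comm]
  | add p q hp hq => simp [hp, hq]

lemma AA (i j : Fin n) : Aop (K := K) i * Aop j = Aop j * Aop i := by
  refine LinearMap.ext fun p => ?_
  simp only [Module.End.mul_apply, Aop, LinearMap.mulLeft_apply]
  ring

section c3
variable (d : Fin n → Fin n → K)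

noncomputable def Sop (i : Fin n) : Module.End K (MvPolynomial (Fin n) K) :=
  ∑ k ∈ Finset.univ.filter (· < i), d k i • Dop k

lemma SA (i j : Fin n) (h : i < j) :
    Sop d j * Aop i = Aop i * Sop d j + d i j • 1 := by
  classical
  rw [Sop, Finset.sum_mul, Finset.mul_sum]
  have : ∀ k ∈ Finset.univ.filter (· < j),
      (d k j • Dop k) * Aop i =
        Aop (K := K) i * (d k j • Dop k) + (if k = i then d i j • 1 else 0) := by
    intro k hk
    rw [smul_mul_assoc, DA, mul_smul_comm, smul_add]
    rcases eq_or_ne k i with rfl | hki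
    · simp
    · simp [hki]
  rw [Finset.sum_congr rfl this, Finset.sum_add_distrib, Finset.sum_ite_eq' _ i]
  simp [h]

lemma AS (i j : Fin n) (h : i < j) :
    Aop j * Sop d i = Sop d i * Aop (K := K) j := by
  classical
  rw [Sop, Finset.sum_mul, Finset.mul_sum]
  refine (Finset.sum_congr rfl ?_).symm
  intro k hk
  have hki : k ≠ j := by
    rcases Finset.mem_filter.mp hk with ⟨-, hk⟩
    exact ne_of_lt (hk.trans h)
  rw [smul_mul_assoc, DA, mul_smul_comm]
  simp [hki]

lemma SS (i j : Fin n) : Sop d j * Sop d i = Sop d i * Sop (K := K) d j := by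
  classical
  have key : ∀ k l : Fin n,
      (d k j • Dop k) * (d l i • Dop l) = (d l i • Dop l) * ((d k j • Dop k) :
        Module.End K (MvPolynomial (Fin n) K)) := by
    intro k l
    rw [smul_mul_assoc, mul_smul_comm, smul_mul_assoc, mul_smul_comm, DD, smul_comm]
  rw [Sop, Sop, Finset.sum_mul_sum, Finset.sum_mul_sum, Finset.sum_comm]
  exact Finset.sum_congr rfl fun k _ => Finset.sum_congr rfl fun l _ => key l k

noncomputable def Top (i : Fin n) : Module.End K (MvPolynomial (Fin n) K) :=
  Aop i + Sop d i

lemma Top_comm {i j : Fin n} (h : i < j) :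
    Top d j * Top d i = Top d i * Top d j + d i j • 1 := by
  rw [Top, Top, add_mul, add_mul, mul_add, mul_add, mul_add, mul_add]
  rw [AA, SA d i j h, AS d i j h, SS d i j]
  abel

end c3

section c4
variable (d : Fin n → Fin n → K)

noncomputable def phi : CSD K d →ₐ[K] Module.End K (MvPolynomial (Fin n) K) :=
  RingQuot.liftAlgHom K ⟨FreeAlgebra.lift K (fun i => Top d i), by
    rintro a b ⟨i, j, hij, rfl, rfl⟩
    simp only [map_mul, map_add, FreeAlgebra.lift_ι_apply, AlgHom.commutes]
    rw [Top_comm d hij, Algebra.algebraMap_eq_smul_one]⟩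

lemma phi_Xg (i : Fin n) : phi d (Xg d i) = Top d i := by
  rw [phi, Xg, RingQuot.liftAlgHom_mkAlgHom_apply, FreeAlgebra.lift_ι_apply]

lemma Top_monomial {i : Fin n} {γ : Fin n →₀ ℕ} (h : ∀ l, l < i → γ l = 0) :
    Top d i (monomial γ (1 : K)) = monomial (γ + Finsupp.single i 1) 1 := by
  classical
  rw [Top, LinearMap.add_apply, Sop, LinearMap.sum_apply]
  have hz : ∀ k ∈ Finset.univ.filter (· < i),
      (d k i • Dop k) (monomial γ (1 : K)) = 0 := by
    intro k hk
    rcases Finset.mem_filter.mp hk with ⟨-, hk⟩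
    rw [LinearMap.smul_apply, Dop]
    simp [pderiv_monomial, h k hk]
  rw [Finset.sum_congr rfl hz]
  simp only [Finset.sum_const_zero, add_zero, Aop, LinearMap.mulLeft_apply]
  rw [X, monomial_mul, one_mul, add_comm]

lemma dg_induction {P : (Fin n →₀ ℕ) → Prop}
    (h : ∀ γ : Fin n →₀ ℕ, (∀ δ : Fin n →₀ ℕ, δ.degree < γ.degree → P δ) → P γ) :
    ∀ γ, P γ := by
  intro γ
  generalize hm : γ.degree = m
  induction m using Nat.strong_induction_on generalizing γ with
  | _ m ih => exact h γ (fun δ hδ => ih δ.degree (hm ▸ hδ) δ rfl)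

lemma phi_W_one (γ : Fin n →₀ ℕ) :
    phi d (W d γ) 1 = monomial γ (1 : K) := by
  classical
  induction γ using dg_induction with
  | h γ ih =>
    rcases eq_or_ne γ 0 with rfl | h
    · rw [W_zero]
      simp [monomial_zero']
    · set k := γ.support.min' (Finsupp.support_nonempty_iff.mpr h) with hk
      set γ' := γ - Finsupp.single k 1 with hγ'
      have hkmem : γ k ≠ 0 := Finsupp.mem_support_iff.mp
        (γ.support.min'_mem (Finsupp.support_nonempty_iff.mpr h))
      have hlt : γ'.degree < γ.degree := dg_sub_single_lt hkmem
      rw [W_pos d h, map_mul, Module.End.mul_apply, ← hk, ← hγ',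
        ih γ' hlt, phi_Xg]
      have hlow : ∀ l, l < k → γ' l = 0 := by
        intro l hl
        have : γ l = 0 := by
          by_contra hc
          exact absurd (Finset.min'_le _ _ (Finsupp.mem_support_iff.2 hc)) (not_le.2 hl)
        simp [hγ', Finsupp.sub_apply, this]
      rw [Top_monomial d hlow, hγ', sub_single_add hkmem]

lemma W_li : LinearIndependent K (W d) := by
  classical
  have h1 : LinearIndependent K (fun γ : Fin n →₀ ℕ => monomial γ (1 : K)) := by
    have := (MvPolynomial.basisMonomials (Fin n) K).linearIndependent
    simpa [MvPolynomial.coe_basisMonomials] using this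
  let ev : Module.End K (MvPolynomial (Fin n) K) →ₗ[K] MvPolynomial (Fin n) K :=
    { toFun := fun f => f 1
      map_add' := fun f g => rfl
      map_smul' := fun c f => rfl }
  have h2 : (fun γ : Fin n →₀ ℕ => monomial γ (1 : K)) =
      (ev ∘ₗ (phi d).toLinearMap) ∘ W d := by
    funext γ
    simp only [Function.comp_apply, LinearMap.coe_comp, AlgHom.toLinearMap_apply]
    exact (phi_W_one d γ).symm
  exact LinearIndependent.of_comp _ (h2 ▸ h1)

end c4

section c5
variable (d : Fin n → Fin n → K)

/-- Span of normal monomials of degree `< m`. -/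
noncomputable def Fspan (m : ℕ) : Submodule K (CSD K d) :=
  Submodule.span K (W d '' {δ | δ.degree < m})

lemma Fspan_mono {m m' : ℕ} (h : m ≤ m') : Fspan d m ≤ Fspan d m' :=
  Submodule.span_mono (Set.image_mono fun δ hδ => lt_of_lt_of_le hδ h)

lemma W_mem_Fspan {γ : Fin n →₀ ℕ} {m : ℕ} (h : γ.degree < m) : W d γ ∈ Fspan d m :=
  Submodule.subset_span ⟨γ, h, rfl⟩

lemma Xg_mul_W_err (i : Fin n) (γ : Fin n →₀ ℕ) :
    Xg d i * W d γ - W d (γ + Finsupp.single i 1) ∈ Fspan d (γ.degree + 1) := by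
  classical
  induction γ using dg_induction generalizing i with
  | h γ ih =>
    by_cases hcase : ∀ l, l < i → γ l = 0
    · rw [Xg_mul_W d (fun l hl => by
        by_contra hlt
        exact (Finsupp.mem_support_iff.mp hl) (hcase l (not_le.mp hlt)))]
      simpa using Submodule.zero_mem _
    · have hγ0 : γ ≠ 0 := by
        rintro rfl
        exact hcase (fun l _ => rfl)
      set k := γ.support.min' (Finsupp.support_nonempty_iff.mpr hγ0) with hk
      have hkmem : γ k ≠ 0 := Finsupp.mem_support_iff.mp
        (γ.support.min'_mem (Finsupp.support_nonempty_iff.mpr hγ0))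
      have hki : k < i := by
        push_neg at hcase
        obtain ⟨l, hl, hl0⟩ := hcase
        exact lt_of_le_of_lt (Finset.min'_le _ _ (Finsupp.mem_support_iff.2 hl0)) hl
      set γ' := γ - Finsupp.single k 1 with hγ'
      have hadd : γ' + Finsupp.single k 1 = γ := sub_single_add hkmem
      have hdeg' : γ'.degree + 1 = γ.degree := by
        conv_rhs => rw [← hadd]
        rw [dg_add, dg_single]
      have hlow : ∀ l, l < k → γ' l = 0 := by
        intro l hl
        have : γ l = 0 := by
          by_contra hc
          exact absurd (Finset.min'_le _ _ (Finsupp.mem_support_iff.2 hc)) (not_le.2 hl)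
        simp [hγ', Finsupp.sub_apply, this]
      -- the inner multiplication-stability of Fspan, from the inductive hypothesis
      have hmul : ∀ a ∈ Fspan d (γ'.degree + 1), Xg d k * a ∈ Fspan d (γ.degree + 1) := by
        intro a ha
        induction ha using Submodule.span_induction with
        | mem x hx =>
            obtain ⟨δ, hδ, rfl⟩ := hx
            simp only [Set.mem_setOf_eq] at hδ
            have h1 : Xg d k * W d δ - W d (δ + Finsupp.single k 1) ∈
                Fspan d (δ.degree + 1) := ih δ (by omega) k
            have h2 : W d (δ + Finsupp.single k 1) ∈ Fspan d (γ.degree + 1) := by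
              refine W_mem_Fspan d ?_
              rw [dg_add, dg_single]
              omega
            have := Submodule.add_mem _ (Fspan_mono d (by omega) h1) h2
            simpa using this
        | zero => simpa using Submodule.zero_mem _
        | add x y hx hy hx' hy' => rw [mul_add]; exact Submodule.add_mem _ hx' hy'
        | smul c x hx hx' => rw [mul_smul_comm]; exact Submodule.smul_mem _ _ hx'
      -- main computation
      have hW : W d γ = Xg d k * W d γ' := by rw [W_pos d hγ0, ← hk, ← hγ']
      have hrel : Xg d i * Xg d k = Xg d k * Xg d i + algebraMap K (CSD K d) (d k i) :=
        Xg_rel d hki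
      have hIH : Xg d i * W d γ' - W d (γ' + Finsupp.single i 1) ∈
          Fspan d (γ'.degree + 1) := ih γ' (by omega) i
      have hXk : Xg d k * W d (γ' + Finsupp.single i 1) =
          W d (γ + Finsupp.single i 1) := by
        have hsupp : ∀ l ∈ (γ' + Finsupp.single i 1).support, k ≤ l := by
          intro l hl
          by_contra hlt
          push_neg at hlt
          have h1 : γ' l = 0 := hlow l hlt
          have h2 : (Finsupp.single i 1 : Fin n →₀ ℕ) l = 0 :=
            Finsupp.single_eq_of_ne (fun h => absurd (h ▸ hlt) (not_lt.2 hki.le))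
          exact (Finsupp.mem_support_iff.mp hl) (by rw [Finsupp.add_apply, h1, h2, add_zero])
        rw [Xg_mul_W d hsupp, add_right_comm, hadd]
      have key : Xg d i * W d γ - W d (γ + Finsupp.single i 1) =
          Xg d k * (Xg d i * W d γ' - W d (γ' + Finsupp.single i 1)) +
            d k i • W d γ' := by
        rw [hW, ← mul_assoc, hrel, add_mul, mul_assoc, mul_sub, hXk,
          Algebra.smul_def]
        abel
      rw [key]
      refine Submodule.add_mem _ (hmul _ (hIH)) ?_
      exact Submodule.smul_mem _ _ (W_mem_Fspan d (by omega))

lemma Xg_mul_Fspan (k : Fin n) {m : ℕ} {a : CSD K d} (ha : a ∈ Fspan d m) :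
    Xg d k * a ∈ Fspan d (m + 1) := by
  induction ha using Submodule.span_induction with
  | mem x hx =>
      obtain ⟨δ, hδ, rfl⟩ := hx
      simp only [Set.mem_setOf_eq] at hδ
      have h1 := Xg_mul_W_err d k δ
      have h2 : W d (δ + Finsupp.single k 1) ∈ Fspan d (m + 1) := by
        refine W_mem_Fspan d ?_
        rw [dg_add, dg_single]
        omega
      have := Submodule.add_mem _ (Fspan_mono d (by omega : δ.degree + 1 ≤ m + 1) h1) h2
      simpa using this
  | zero => simpa using Submodule.zero_mem _
  | add x y hx hy hx' hy' => rw [mul_add]; exact Submodule.add_mem _ hx' hy'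
  | smul c x hx hx' => rw [mul_smul_comm]; exact Submodule.smul_mem _ _ hx'

lemma W_mul_W_err (γ δ : Fin n →₀ ℕ) :
    W d γ * W d δ - W d (γ + δ) ∈ Fspan d (γ.degree + δ.degree) := by
  classical
  induction γ using dg_induction with
  | h γ ih =>
    rcases eq_or_ne γ 0 with rfl | hγ0
    · rw [W_zero, one_mul, zero_add]
      simpa using Submodule.zero_mem _
    · set k := γ.support.min' (Finsupp.support_nonempty_iff.mpr hγ0) with hk
      have hkmem : γ k ≠ 0 := Finsupp.mem_support_iff.mp
        (γ.support.min'_mem (Finsupp.support_nonempty_iff.mpr hγ0))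
      set γ' := γ - Finsupp.single k 1 with hγ'
      have hadd : γ' + Finsupp.single k 1 = γ := sub_single_add hkmem
      have hdeg' : γ'.degree + 1 = γ.degree := by
        conv_rhs => rw [← hadd]
        rw [dg_add, dg_single]
      have hW : W d γ = Xg d k * W d γ' := by rw [W_pos d hγ0, ← hk, ← hγ']
      have hIH : W d γ' * W d δ - W d (γ' + δ) ∈ Fspan d (γ'.degree + δ.degree) :=
        ih γ' (by omega)
      have herr : Xg d k * W d (γ' + δ) - W d (γ' + δ + Finsupp.single k 1) ∈
          Fspan d ((γ' + δ).degree + 1) := Xg_mul_W_err d k (γ' + δ)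
      have heq : γ' + δ + Finsupp.single k 1 = γ + δ := by
        rw [add_right_comm, hadd]
      have hdeg2 : (γ' + δ).degree + 1 = γ.degree + δ.degree := by
        rw [dg_add]; omega
      have key : W d γ * W d δ - W d (γ + δ) =
          Xg d k * (W d γ' * W d δ - W d (γ' + δ)) +
            (Xg d k * W d (γ' + δ) - W d (γ' + δ + Finsupp.single k 1)) := by
        rw [hW, heq, mul_sub, mul_assoc]
        abel
      rw [key]
      refine Submodule.add_mem _ ?_ ?_
      · have := Xg_mul_Fspan d k hIH
        exact Fspan_mono d (by omega) this
      · exact hdeg2 ▸ herr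

lemma W_span : Submodule.span K (Set.range (W d)) = ⊤ := by
  classical
  set S := Submodule.span K (Set.range (W d)) with hS
  have hFS : ∀ m, Fspan d m ≤ S :=
    fun m => Submodule.span_mono (Set.image_subset_range _ _)
  have hone : (1 : CSD K d) ∈ S := by
    rw [← W_zero d]
    exact Submodule.subset_span ⟨0, rfl⟩
  have hstep : ∀ a : CSD K d, ∀ s ∈ S, a * s ∈ S := by
    intro a
    obtain ⟨x, rfl⟩ := RingQuot.mkAlgHom_surjective K (csdRel K d) a
    induction x using FreeAlgebra.induction with
    | grade0 r =>
        intro s hs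
        rw [AlgHom.commutes, ← Algebra.smul_def]
        exact Submodule.smul_mem _ _ hs
    | grade1 i =>
        intro s hs
        induction hs using Submodule.span_induction with
        | mem x hx =>
            obtain ⟨δ, rfl⟩ := hx
            have h1 := Xg_mul_W_err d i δ
            have h2 : W d (δ + Finsupp.single i 1) ∈ S :=
              Submodule.subset_span ⟨_, rfl⟩
            have h3 : Xg d i * W d δ ∈ S := by
              have := Submodule.add_mem _ (hFS _ h1) h2
              simpa using this
            exact h3
        | zero => simpa using Submodule.zero_mem _
        | add x y hx hy hx' hy' =>
            rw [mul_add]; exact Submodule.add_mem _ hx' hy'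
        | smul c x hx hx' =>
            rw [mul_smul_comm]; exact Submodule.smul_mem _ _ hx'
    | mul x y hx hy =>
        intro s hs
        rw [map_mul, mul_assoc]
        exact hx _ (hy s hs)
    | add x y hx hy =>
        intro s hs
        rw [map_add, add_mul]
        exact Submodule.add_mem _ (hx s hs) (hy s hs)
  rw [eq_top_iff]
  intro a _
  simpa using hstep a 1 hone

/-- The PBW-type basis of `CSD`. -/
noncomputable def bW : Module.Basis (Fin n →₀ ℕ) K (CSD K d) :=
  Module.Basis.mk (W_li d) (by rw [W_span])

lemma bW_apply (γ : Fin n →₀ ℕ) : bW d γ = W d γ := Module.Basis.mk_apply _ _ _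

lemma repr_W (γ : Fin n →₀ ℕ) :
    (bW d).repr (W d γ) = Finsupp.single γ 1 := by
  rw [← bW_apply]
  exact (bW d).repr_self γ

end c5

section order
/-- the degLex ranking function -/
noncomputable def ordM (γ : Fin n →₀ ℕ) : ℕ ×ₗ Lex (Fin n →₀ ℕ) := toLex (γ.degree, toLex γ)

lemma ordM_injective : Function.Injective (ordM (n := n)) := by
  intro γ δ h
  have := congrArg (fun p => (ofLex p).2) h
  exact congrArg ofLex this

/-- degLex strict order -/
def dlt (γ δ : Fin n →₀ ℕ) : Prop := ordM γ < ordM δ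

/-- degLex weak order -/
def dle (γ δ : Fin n →₀ ℕ) : Prop := γ = δ ∨ dlt γ δ

lemma dlt_wf : WellFounded (dlt (n := n)) :=
  InvImage.wf ordM IsWellFounded.wf

lemma dlt_irrefl (γ : Fin n →₀ ℕ) : ¬ dlt γ γ := lt_irrefl _

lemma dlt_trans {α β γ : Fin n →₀ ℕ} (h1 : dlt α β) (h2 : dlt β γ) : dlt α γ :=
  lt_trans h1 h2

lemma dlt_trichotomy (γ δ : Fin n →₀ ℕ) : dlt γ δ ∨ γ = δ ∨ dlt δ γ := by
  rcases lt_trichotomy (ordM γ) (ordM δ) with h | h | h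
  · exact Or.inl h
  · exact Or.inr (Or.inl (ordM_injective h))
  · exact Or.inr (Or.inr h)

lemma dle_refl (γ : Fin n →₀ ℕ) : dle γ γ := Or.inl rfl

lemma dlt_of_dle_of_dlt {α β γ : Fin n →₀ ℕ} (h1 : dle α β) (h2 : dlt β γ) : dlt α γ := by
  rcases h1 with rfl | h1
  · exact h2
  · exact dlt_trans h1 h2

lemma dlt_of_dlt_of_dle {α β γ : Fin n →₀ ℕ} (h1 : dlt α β) (h2 : dle β γ) : dlt α γ := by
  rcases h2 with rfl | h2
  · exact h1
  · exact dlt_trans h1 h2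

lemma dle_trans {α β γ : Fin n →₀ ℕ} (h1 : dle α β) (h2 : dle β γ) : dle α γ := by
  rcases h1 with rfl | h1
  · exact h2
  · exact Or.inr (dlt_of_dlt_of_dle h1 h2)

lemma dle_antisymm {α β : Fin n →₀ ℕ} (h1 : dle α β) (h2 : dle β α) : α = β := by
  rcases h1 with rfl | h1
  · rfl
  · rcases h2 with rfl | h2
    · rfl
    · exact absurd (dlt_trans h1 h2) (dlt_irrefl _)

lemma dlt_iff {γ δ : Fin n →₀ ℕ} :
    dlt γ δ ↔ γ.degree < δ.degree ∨ (γ.degree = δ.degree ∧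
      toLex γ < toLex δ) := by
  rw [dlt, ordM, ordM, Prod.Lex.lt_iff]
  exact Iff.rfl

lemma dlt_of_degree_lt {γ δ : Fin n →₀ ℕ} (h : γ.degree < δ.degree) : dlt γ δ :=
  dlt_iff.mpr (Or.inl h)

lemma degree_le_of_dle {γ δ : Fin n →₀ ℕ} (h : dle γ δ) : γ.degree ≤ δ.degree := by
  rcases h with rfl | h
  · exact le_rfl
  · rcases dlt_iff.mp h with h | ⟨h, -⟩
    · exact le_of_lt h
    · exact le_of_eq h

lemma dlt_add_right {γ δ : Fin n →₀ ℕ} (h : dlt γ δ) (ε : Fin n →₀ ℕ) :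
    dlt (γ + ε) (δ + ε) := by
  rcases dlt_iff.mp h with h | ⟨h1, h2⟩
  · exact dlt_of_degree_lt (by rw [dg_add, dg_add]; omega)
  · refine dlt_iff.mpr (Or.inr ⟨by rw [dg_add, dg_add, h1], ?_⟩)
    exact add_lt_add_left (α := Lex (Fin n →₀ ℕ)) h2 (toLex ε)

lemma dle_add {α α' β β' : Fin n →₀ ℕ} (h1 : dle α α') (h2 : dle β β') :
    dle (α + β) (α' + β') := by
  have s1 : dle (α + β) (α' + β) := by
    rcases h1 with rfl | h1
    · exact dle_refl _
    · exact Or.inr (dlt_add_right h1 β)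
  have s2 : dle (α' + β) (α' + β') := by
    rcases h2 with rfl | h2
    · exact dle_refl _
    · rw [add_comm α' β, add_comm α' β']
      exact Or.inr (dlt_add_right h2 α')
  exact dle_trans s1 s2

lemma dle_add_eq {α α' β β' : Fin n →₀ ℕ} (h1 : dle α α') (h2 : dle β β')
    (h : α + β = α' + β') : α = α' ∧ β = β' := by
  rcases h1 with rfl | h1
  · refine ⟨rfl, ?_⟩
    exact add_left_cancel h
  · exfalso
    have : dlt (α + β) (α' + β') :=
      dlt_of_dlt_of_dle (dlt_add_right h1 β) (dle_add (dle_refl α') h2)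
    rw [h] at this
    exact dlt_irrefl _ this

lemma dlt_zero {γ : Fin n →₀ ℕ} (h : γ ≠ 0) : dlt 0 γ := by
  refine dlt_of_degree_lt ?_
  rw [map_zero]
  exact Nat.pos_of_ne_zero (fun h0 => h ((Finsupp.degree_eq_zero_iff γ).mp h0))

end order

section leading
variable (d : Fin n → Fin n → K)

/-- Leading exponent (with respect to degLex) of a nonzero element. -/
noncomputable def LEx (a : CSD K d) : Fin n →₀ ℕ :=
  if h : ((bW d).repr a).support.Nonempty then
    Classical.choose (Finset.exists_max_image _ ordM h)
  else 0

lemma repr_support_nonempty {a : CSD K d} (h : a ≠ 0) :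
    ((bW d).repr a).support.Nonempty := by
  rw [Finsupp.support_nonempty_iff]
  intro h0
  exact h (((bW d).repr).map_eq_zero_iff.mp h0)

lemma LEx_mem {a : CSD K d} (h : a ≠ 0) :
    LEx d a ∈ ((bW d).repr a).support := by
  rw [LEx, dif_pos (repr_support_nonempty d h)]
  exact (Classical.choose_spec (Finset.exists_max_image _ ordM
    (repr_support_nonempty d h))).1

lemma LEx_max {a : CSD K d} (h : a ≠ 0) {γ : Fin n →₀ ℕ}
    (hγ : γ ∈ ((bW d).repr a).support) : dle γ (LEx d a) := by
  have hs := (Classical.choose_spec (Finset.exists_max_image _ ordM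
    (repr_support_nonempty d h))).2 γ hγ
  rw [LEx, dif_pos (repr_support_nonempty d h)]
  rcases lt_or_eq_of_le hs with h' | h'
  · exact Or.inr h'
  · exact Or.inl (ordM_injective h')

/-- Leading coefficient. -/
noncomputable def LCx (a : CSD K d) : K := (bW d).repr a (LEx d a)

lemma LCx_ne_zero {a : CSD K d} (h : a ≠ 0) : LCx d a ≠ 0 :=
  Finsupp.mem_support_iff.mp (LEx_mem d h)

lemma repr_eq_zero_of_not_dle {a : CSD K d} (h : a ≠ 0) {γ : Fin n →₀ ℕ}
    (hγ : ¬ dle γ (LEx d a)) : (bW d).repr a γ = 0 := by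
  by_contra hc
  exact hγ (LEx_max d h (Finsupp.mem_support_iff.2 hc))

lemma repr_Fspan_eq_zero {x : CSD K d} {m : ℕ} (hx : x ∈ Fspan d m)
    {γ : Fin n →₀ ℕ} (hγ : m ≤ γ.degree) : (bW d).repr x γ = 0 := by
  induction hx using Submodule.span_induction with
  | mem y hy =>
      obtain ⟨δ, hδ, rfl⟩ := hy
      simp only [Set.mem_setOf_eq] at hδ
      rw [repr_W]
      rw [Finsupp.single_apply]
      rw [if_neg]
      intro h
      subst h
      omega
  | zero => simp
  | add y z hy hz hy' hz' => rw [map_add, Finsupp.add_apply, hy', hz', add_zero]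
  | smul c y hy hy' => rw [map_smul, Finsupp.smul_apply, hy', smul_zero]

lemma repr_W_mul_W (α β γ : Fin n →₀ ℕ) (h : α.degree + β.degree ≤ γ.degree) :
    (bW d).repr (W d α * W d β) γ = (Finsupp.single (α + β) (1 : K)) γ := by
  have key : W d α * W d β = W d (α + β) + (W d α * W d β - W d (α + β)) := by abel
  rw [key, map_add, Finsupp.add_apply, repr_W,
    repr_Fspan_eq_zero d (W_mul_W_err d α β) h, add_zero]

lemma repr_mul_apply (a b : CSD K d) (γ : Fin n →₀ ℕ)
    (h : ∀ α ∈ ((bW d).repr a).support, ∀ β ∈ ((bW d).repr b).support,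
      α.degree + β.degree ≤ γ.degree) :
    (bW d).repr (a * b) γ =
      ∑ α ∈ ((bW d).repr a).support, ∑ β ∈ ((bW d).repr b).support,
        (if α + β = γ then ((bW d).repr a α) * ((bW d).repr b β) else 0) := by
  classical
  set A := (bW d).repr a with hA
  set B := (bW d).repr b with hB
  have hrepr : ∀ x : CSD K d, x = ∑ α ∈ ((bW d).repr x).support,
      ((bW d).repr x) α • W d α := by
    intro x
    conv_lhs => rw [← (bW d).linearCombination_repr x]
    rw [Finsupp.linearCombination_apply, Finsupp.sum]
    exact Finset.sum_congr rfl fun α _ => by rw [bW_apply]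
  have ha : a = ∑ α ∈ A.support, A α • W d α := hrepr a
  have hb : b = ∑ β ∈ B.support, B β • W d β := hrepr b
  have hab : a * b = ∑ α ∈ A.support, ∑ β ∈ B.support,
      (A α * B β) • (W d α * W d β) := by
    conv_lhs => rw [ha, hb]
    rw [Finset.sum_mul]
    refine Finset.sum_congr rfl fun α hα => ?_
    rw [Finset.mul_sum]
    refine Finset.sum_congr rfl fun β hβ => ?_
    rw [smul_mul_assoc, mul_smul_comm, smul_smul]
  rw [hab, map_sum, Finsupp.finset_sum_apply]
  refine Finset.sum_congr rfl fun α hα => ?_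
  rw [map_sum, Finsupp.finset_sum_apply]
  refine Finset.sum_congr rfl fun β hβ => ?_
  rw [map_smul, Finsupp.smul_apply, repr_W_mul_W d α β γ (h α hα β hβ),
    Finsupp.single_apply]
  by_cases hc : α + β = γ
  · rw [if_pos hc, if_pos hc, smul_eq_mul, mul_one]
  · rw [if_neg hc, if_neg hc, smul_zero]

lemma repr_mul_LEx (a b : CSD K d) (ha : a ≠ 0) (hb : b ≠ 0) :
    (bW d).repr (a * b) (LEx d a + LEx d b) = LCx d a * LCx d b := by
  classical
  have hdegbound : ∀ α ∈ ((bW d).repr a).support, ∀ β ∈ ((bW d).repr b).support,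
      α.degree + β.degree ≤ (LEx d a + LEx d b).degree := by
    intro α hα β hβ
    rw [dg_add]
    have h1 := degree_le_of_dle (LEx_max d ha hα)
    have h2 := degree_le_of_dle (LEx_max d hb hβ)
    omega
  rw [repr_mul_apply d a b _ hdegbound]
  rw [Finset.sum_eq_single_of_mem (LEx d a) (LEx_mem d ha)]
  · rw [Finset.sum_eq_single_of_mem (LEx d b) (LEx_mem d hb)]
    · rw [if_pos rfl]
      rfl
    · intro β hβ hβne
      rw [if_neg]
      intro hc
      exact hβne (add_left_cancel hc)
  · intro α hα hαne
    refine Finset.sum_eq_zero fun β hβ => ?_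
    rw [if_neg]
    intro hc
    exact hαne (dle_add_eq (LEx_max d ha hα) (LEx_max d hb hβ) hc).1

lemma repr_mul_support (a b : CSD K d) (ha : a ≠ 0) (hb : b ≠ 0)
    {γ : Fin n →₀ ℕ} (hγ : ¬ dle γ (LEx d a + LEx d b)) :
    (bW d).repr (a * b) γ = 0 := by
  classical
  set ζ := LEx d a + LEx d b with hζ
  by_cases hdeg : γ.degree < ζ.degree
  · exact absurd (Or.inr (dlt_of_degree_lt hdeg)) hγ
  · push_neg at hdeg
    have hdegbound : ∀ α ∈ ((bW d).repr a).support, ∀ β ∈ ((bW d).repr b).support,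
        α.degree + β.degree ≤ γ.degree := by
      intro α hα β hβ
      have h1 := degree_le_of_dle (LEx_max d ha hα)
      have h2 := degree_le_of_dle (LEx_max d hb hβ)
      have h3 : ζ.degree = (LEx d a).degree + (LEx d b).degree := dg_add _ _
      omega
    rw [repr_mul_apply d a b _ hdegbound]
    refine Finset.sum_eq_zero fun α hα => Finset.sum_eq_zero fun β hβ => ?_
    rw [if_neg]
    intro hc
    refine hγ ?_
    rw [← hc]
    exact dle_add (LEx_max d ha hα) (LEx_max d hb hβ)

lemma mul_ne_zero' {a b : CSD K d} (ha : a ≠ 0) (hb : b ≠ 0) : a * b ≠ 0 := by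
  intro h
  have h1 := repr_mul_LEx d a b ha hb
  rw [h, map_zero, Finsupp.coe_zero, Pi.zero_apply] at h1
  exact mul_ne_zero (LCx_ne_zero d ha) (LCx_ne_zero d hb) h1.symm

lemma LEx_mul (a b : CSD K d) (ha : a ≠ 0) (hb : b ≠ 0) :
    LEx d (a * b) = LEx d a + LEx d b := by
  have hab := mul_ne_zero' d ha hb
  have hmem : LEx d a + LEx d b ∈ ((bW d).repr (a * b)).support := by
    rw [Finsupp.mem_support_iff, repr_mul_LEx d a b ha hb]
    exact mul_ne_zero (LCx_ne_zero d ha) (LCx_ne_zero d hb)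
  refine dle_antisymm ?_ (LEx_max d hab hmem)
  rcases dlt_trichotomy (LEx d (a * b)) (LEx d a + LEx d b) with h | h | h
  · exact Or.inr h
  · exact Or.inl h
  · exfalso
    have := repr_mul_support d a b ha hb (γ := LEx d (a * b)) (fun hle => ?_)
    · exact LCx_ne_zero d hab this
    · rcases hle with he | hlt
      · rw [he] at h
        exact dlt_irrefl _ h
      · exact dlt_irrefl _ (dlt_trans h hlt)

end leading

section domain
variable (d : Fin n → Fin n → K)

lemma W_ne_zero (γ : Fin n →₀ ℕ) : W d γ ≠ 0 := by
  intro h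
  have := repr_W d γ
  rw [h, map_zero] at this
  have h2 := congrArg (fun f : (Fin n →₀ ℕ) →₀ K => f γ) this.symm
  simp only [Finsupp.coe_zero, Pi.zero_apply, Finsupp.single_eq_same] at h2
  exact one_ne_zero h2

lemma one_ne_zero' : (1 : CSD K d) ≠ 0 := by
  rw [← W_zero d]
  exact W_ne_zero d 0

instance : Nontrivial (CSD K d) := nontrivial_of_ne 1 0 (one_ne_zero' d)

lemma LEx_W (γ : Fin n →₀ ℕ) : LEx d (W d γ) = γ := by
  have hmem := LEx_mem d (W_ne_zero d γ)
  rw [repr_W] at hmem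
  exact ((Finsupp.mem_support_single _ _ _).mp hmem).1

lemma LEx_one : LEx d (1 : CSD K d) = 0 := by
  rw [← W_zero d]; exact LEx_W d 0

theorem csd_isDomain : IsDomain (CSD K d) := by
  have : NoZeroDivisors (CSD K d) := ⟨by
    intro a b hab
    by_contra h
    push_neg at h
    exact mul_ne_zero' d h.1 h.2 hab⟩
  exact NoZeroDivisors.to_isDomain _

lemma repr_one : (bW d).repr (1 : CSD K d) = Finsupp.single 0 1 := by
  rw [← W_zero d, repr_W]

lemma repr_algebraMap (c : K) :
    (bW d).repr (algebraMap K (CSD K d) c) = Finsupp.single 0 c := by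
  rw [Algebra.algebraMap_eq_smul_one, map_smul, repr_one, Finsupp.smul_single,
    smul_eq_mul, mul_one]

theorem csd_units (u : CSD K d) :
    IsUnit u ↔ ∃ c : K, c ≠ 0 ∧ u = algebraMap K (CSD K d) c := by
  constructor
  · intro hu
    obtain ⟨v, hv⟩ := hu.exists_right_inv
    have hu0 : u ≠ 0 := by
      intro h
      rw [h, zero_mul] at hv
      exact one_ne_zero' d hv.symm
    have hv0 : v ≠ 0 := by
      intro h
      rw [h, mul_zero] at hv
      exact one_ne_zero' d hv.symm
    have hLE : LEx d u + LEx d v = 0 := by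
      rw [← LEx_mul d u v hu0 hv0, hv, LEx_one]
    have hLEu : LEx d u = 0 := by
      have h1 : (LEx d u).degree + (LEx d v).degree = 0 := by
        rw [← dg_add, hLE, map_zero]
      exact (Finsupp.degree_eq_zero_iff _).mp (by omega)
    refine ⟨(bW d).repr u 0, ?_, ?_⟩
    · rw [← hLEu]
      exact LCx_ne_zero d hu0
    · apply (bW d).repr.injective
      rw [repr_algebraMap]
      ext γ
      rcases eq_or_ne γ 0 with rfl | hγ
      · simp
      · rw [Finsupp.single_eq_of_ne hγ]
        refine repr_eq_zero_of_not_dle d hu0 ?_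
        rw [hLEu]
        rintro (rfl | hlt)
        · exact hγ rfl
        · exact dlt_irrefl _ (dlt_trans hlt (dlt_zero hγ))
  · rintro ⟨c, hc, rfl⟩
    exact (IsUnit.mk0 c hc).map (algebraMap K (CSD K d))

end domain

section noetherian
variable (d : Fin n → Fin n → K)

/-- Set of leading exponents of nonzero elements of a left ideal. -/
def ESet (N : Submodule (CSD K d) (CSD K d)) : Set (Fin n →₀ ℕ) :=
  {γ | ∃ a ∈ N, a ≠ 0 ∧ LEx d a = γ}

lemma ESet_add_stable {N : Submodule (CSD K d) (CSD K d)} {γ : Fin n →₀ ℕ}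
    (h : γ ∈ ESet d N) (δ : Fin n →₀ ℕ) : δ + γ ∈ ESet d N := by
  obtain ⟨a, haN, ha0, haL⟩ := h
  refine ⟨W d δ * a, ?_, mul_ne_zero' d (W_ne_zero d δ) ha0, ?_⟩
  · exact N.smul_mem (W d δ) haN
  · rw [LEx_mul d _ _ (W_ne_zero d δ) ha0, LEx_W, haL]

lemma ESet_mono {N N' : Submodule (CSD K d) (CSD K d)} (h : N ≤ N') :
    ESet d N ⊆ ESet d N' := by
  rintro γ ⟨a, haN, ha0, haL⟩
  exact ⟨a, h haN, ha0, haL⟩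

lemma le_of_ESet_le {N N' : Submodule (CSD K d) (CSD K d)} (hNN : N ≤ N')
    (hE : ESet d N' ⊆ ESet d N) : N' ≤ N := by
  have main : ∀ μ : Fin n →₀ ℕ, ∀ a ∈ N', LEx d a = μ → a ∈ N := by
    intro μ0
    refine (dlt_wf (n := n)).induction
      (C := fun μ => ∀ a ∈ N', LEx d a = μ → a ∈ N) μ0 ?_
    intro μ ih a haN' haL
    subst haL
    rcases eq_or_ne a 0 with rfl | ha0
    · exact N.zero_mem
    · have hEa : LEx d a ∈ ESet d N := hE ⟨a, haN', ha0, rfl⟩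
      obtain ⟨b, hbN, hb0, hbL⟩ := hEa
      set lam := LCx d a * (LCx d b)⁻¹ with hlam
      set c := a - algebraMap K (CSD K d) lam * b with hc
      have hcN' : c ∈ N' := by
        refine Submodule.sub_mem _ haN' (N'.smul_mem _ (hNN hbN))
      have hback : a = c + algebraMap K (CSD K d) lam * b := by rw [hc]; abel
      have hrc : ∀ γ, (bW d).repr c γ =
          (bW d).repr a γ - lam * (bW d).repr b γ := by
        intro γ
        rw [hc, map_sub, Finsupp.sub_apply, Algebra.algebraMap_eq_smul_one,
          smul_mul_assoc, one_mul, map_smul, Finsupp.smul_apply, smul_eq_mul]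
      have hctop : (bW d).repr c (LEx d a) = 0 := by
        rw [hrc, hlam]
        have hbne : LCx d b ≠ 0 := LCx_ne_zero d hb0
        have h1 : ((bW d).repr b) (LEx d a) = LCx d b := by rw [← hbL]; rfl
        have h2 : ((bW d).repr a) (LEx d a) = LCx d a := rfl
        rw [h1, h2]
        field_simp
        simp
      rcases eq_or_ne c 0 with hc0 | hc0
      · rw [hback, hc0, zero_add]
        exact N.smul_mem _ hbN
      · have hlt : dlt (LEx d c) (LEx d a) := by
          have hmem := LEx_mem d hc0
          rw [Finsupp.mem_support_iff] at hmem
          have hdle : dle (LEx d c) (LEx d a) := by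
            by_contra hnd
            apply hmem
            rw [hrc]
            rw [repr_eq_zero_of_not_dle d ha0 hnd,
              repr_eq_zero_of_not_dle d hb0 (hbL ▸ hnd), mul_zero, sub_zero]
          rcases hdle with he | hlt
          · exact absurd (he ▸ hctop) hmem
          · exact hlt
        have hcN : c ∈ N := ih (LEx d c) hlt c hcN' rfl
        rw [hback]
        exact N.add_mem hcN (N.smul_mem _ hbN)
  intro a haN'
  exact main (LEx d a) a haN' rfl

/-- The monomial ideal associated to a set of exponents. -/
noncomputable def Emap (S : Set (Fin n →₀ ℕ)) : Ideal (MvPolynomial (Fin n) K) :=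
  Ideal.span ((fun γ => monomial γ (1 : K)) '' S)

lemma mono_mem_Emap {S : Set (Fin n →₀ ℕ)} (hS : ∀ γ ∈ S, ∀ δ, δ + γ ∈ S)
    {γ : Fin n →₀ ℕ} (h : monomial γ (1 : K) ∈ Emap S) : γ ∈ S := by
  classical
  set J : Ideal (MvPolynomial (Fin n) K) :=
    { carrier := {p | ∀ ε ∈ p.support, ε ∈ S}
      add_mem' := by
        intro p q hp hq ε hε
        rcases Finset.mem_union.mp (MvPolynomial.support_add hε) with h' | h'
        · exact hp ε h'
        · exact hq ε h'
      zero_mem' := by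
        intro ε hε
        simp at hε
      smul_mem' := by
        intro r p hp ε hε
        rw [smul_eq_mul] at hε
        have := MvPolynomial.support_mul r p hε
        rw [Finset.mem_add] at this
        obtain ⟨u, hu, v, hv, rfl⟩ := this
        exact hS v (hp v hv) u } with hJ
  have hle : Emap S ≤ J := by
    rw [Emap, Ideal.span_le]
    rintro p ⟨δ, hδ, rfl⟩
    intro ε hε
    rw [MvPolynomial.support_monomial, if_neg (one_ne_zero)] at hε
    rwa [Finset.mem_singleton.mp hε]
  have := hle h γ
  apply this
  rw [MvPolynomial.support_monomial, if_neg (one_ne_zero)]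
  exact Finset.mem_singleton_self γ

lemma Emap_strict_mono {N N' : Submodule (CSD K d) (CSD K d)} (h : N < N') :
    Emap (K := K) (ESet d N) < Emap (K := K) (ESet d N') := by
  have hle : Emap (K := K) (ESet d N) ≤ Emap (K := K) (ESet d N') :=
    Ideal.span_mono (Set.image_mono (ESet_mono d h.le))
  refine lt_of_le_of_ne hle ?_
  intro heq
  have hnotle : ¬ N' ≤ N := fun hc => (lt_irrefl N) (lt_of_lt_of_le h hc)
  have hEne : ¬ ESet d N' ⊆ ESet d N := fun hc => hnotle (le_of_ESet_le d h.le hc)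
  obtain ⟨γ, hγ', hγ⟩ := Set.not_subset.mp hEne
  apply hγ
  refine mono_mem_Emap (K := K) (fun ε hε δ => ESet_add_stable d hε δ) ?_
  rw [heq]
  exact Ideal.subset_span ⟨γ, hγ', rfl⟩

theorem csd_noetherian : IsNoetherianRing (CSD K d) := by
  rw [isNoetherianRing_iff, isNoetherian_iff]
  have hMv : IsNoetherianRing (MvPolynomial (Fin n) K) := inferInstance
  have hwf : WellFounded ((· > ·) : Ideal (MvPolynomial (Fin n) K) →
      Ideal (MvPolynomial (Fin n) K) → Prop) := by
    rw [isNoetherianRing_iff, isNoetherian_iff] at hMv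
    exact hMv
  refine Subrelation.wf ?_ (InvImage.wf (fun N => Emap (K := K) (ESet d N)) hwf)
  intro N' N hlt
  exact Emap_strict_mono d hlt

end noetherian

section opposite
variable (d e f : Fin n → Fin n → K)

/-- The canonical map `CSD(f) → CSD(e)ᵐᵒᵖ` when `f = -e` on the relevant entries. -/
noncomputable def toOpMap (hef : ∀ i j : Fin n, i < j → f i j = -(e i j)) :
    CSD K f →ₐ[K] (CSD K e)ᵐᵒᵖ :=
  RingQuot.liftAlgHom K ⟨FreeAlgebra.lift K (fun i => MulOpposite.op (Xg e i)), by
    rintro a b ⟨i, j, hij, rfl, rfl⟩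
    simp only [map_mul, map_add, FreeAlgebra.lift_ι_apply, AlgHom.commutes]
    rw [← MulOpposite.op_mul, ← MulOpposite.op_mul]
    have halg : algebraMap K (CSD K e)ᵐᵒᵖ (f i j) =
        MulOpposite.op (algebraMap K (CSD K e) (f i j)) := rfl
    rw [halg, ← MulOpposite.op_add, hef i j hij]
    congr 1
    rw [Xg_rel e hij]
    rw [map_neg]
    abel⟩

lemma toOpMap_Xg (hef : ∀ i j : Fin n, i < j → f i j = -(e i j)) (i : Fin n) :
    toOpMap e f hef (Xg f i) = MulOpposite.op (Xg e i) := by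
  rw [toOpMap, Xg, RingQuot.liftAlgHom_mkAlgHom_apply, FreeAlgebra.lift_ι_apply]

lemma toOpMap_surjective (hef : ∀ i j : Fin n, i < j → f i j = -(e i j)) :
    Function.Surjective (toOpMap e f hef) := by
  intro a
  obtain ⟨x, hx⟩ := RingQuot.mkAlgHom_surjective K (csdRel K e) a.unop
  suffices h : ∀ x : FreeAlgebra K (Fin n), ∃ y,
      toOpMap e f hef y = MulOpposite.op (RingQuot.mkAlgHom K (csdRel K e) x) by
    obtain ⟨y, hy⟩ := h x
    exact ⟨y, by rw [hy, hx, MulOpposite.op_unop]⟩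
  intro x
  induction x using FreeAlgebra.induction with
  | grade0 r =>
      exact ⟨algebraMap K _ r, by rw [AlgHom.commutes, AlgHom.commutes]; rfl⟩
  | grade1 i => exact ⟨Xg f i, toOpMap_Xg e f hef i⟩
  | mul x₁ x₂ h₁ h₂ =>
      obtain ⟨y₁, hy₁⟩ := h₁
      obtain ⟨y₂, hy₂⟩ := h₂
      refine ⟨y₂ * y₁, ?_⟩
      rw [map_mul, hy₁, hy₂, map_mul]
      rfl
  | add x₁ x₂ h₁ h₂ =>
      obtain ⟨y₁, hy₁⟩ := h₁
      obtain ⟨y₂, hy₂⟩ := h₂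
      exact ⟨y₁ + y₂, by rw [map_add, hy₁, hy₂, map_add, MulOpposite.op_add]⟩

lemma toOpMap_injective (hef : ∀ i j : Fin n, i < j → f i j = -(e i j))
    (hfe : ∀ i j : Fin n, i < j → e i j = -(f i j)) :
    Function.Injective (toOpMap e f hef) := by
  have hcomp : ∀ y : CSD K f,
      (AlgHom.op (toOpMap f e hfe)) (toOpMap e f hef y) =
        (AlgEquiv.opOp K (CSD K f)) y := by
    intro y
    obtain ⟨x, rfl⟩ := RingQuot.mkAlgHom_surjective K (csdRel K f) y
    induction x using FreeAlgebra.induction with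
    | grade0 r => rw [AlgHom.commutes, AlgHom.commutes, AlgHom.commutes, AlgEquiv.commutes]
    | grade1 i =>
        have h1 : RingQuot.mkAlgHom K (csdRel K f) (FreeAlgebra.ι K i) = Xg f i := rfl
        rw [h1, toOpMap_Xg e f hef i]
        have h2 : (AlgHom.op (toOpMap f e hfe)) (MulOpposite.op (Xg e i)) =
            MulOpposite.op (toOpMap f e hfe (Xg e i)) := rfl
        rw [h2, toOpMap_Xg f e hfe i]
        rfl
    | mul x₁ x₂ h₁ h₂ => rw [map_mul, map_mul, map_mul, h₁, h₂, map_mul]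
    | add x₁ x₂ h₁ h₂ => rw [map_add, map_add, map_add, h₁, h₂, map_add]
  intro y₁ y₂ h
  have := congrArg (AlgHom.op (toOpMap f e hfe)) h
  rw [hcomp, hcomp] at this
  exact (AlgEquiv.opOp K (CSD K f)).injective this

theorem csd_noetherian_op : IsNoetherianRing (CSD K d)ᵐᵒᵖ := by
  set d' : Fin n → Fin n → K := fun i j => -(d i j) with hd'
  have hef : ∀ i j : Fin n, i < j → d' i j = -(d i j) := fun i j _ => rfl
  have hfe : ∀ i j : Fin n, i < j → d i j = -(d' i j) := fun i j _ => by
    rw [hd']; ring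
  have hbij : Function.Bijective (toOpMap d d' hef) :=
    ⟨toOpMap_injective d d' hef hfe, toOpMap_surjective d d' hef⟩
  have : IsNoetherianRing (CSD K d') := csd_noetherian d'
  exact isNoetherianRing_of_ringEquiv (CSD K d')
    (RingEquiv.ofBijective ((toOpMap d d' hef) : CSD K d' →+* (CSD K d)ᵐᵒᵖ) hbij)

end opposite

end CSDproof

/-- `𝒞𝒮𝒟ₙ(K)` is a left and right Noetherian domain whose units are
exactly the nonzero scalars. -/
theorem csd_noetherian_domain_units (K : Type*) [Field K] [CharZero K]
    (n : ℕ) (hn : 2 ≤ n)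
    (d : Fin n → Fin n → K) (hd : ∀ i j : Fin n, i < j → d i j ≠ 0) :
    IsNoetherianRing (CSD K d) ∧ IsNoetherianRing (CSD K d)ᵐᵒᵖ ∧
    IsDomain (CSD K d) ∧
    (∀ u : CSD K d, IsUnit u ↔ ∃ c : K, c ≠ 0 ∧ u = algebraMap K (CSD K d) c) :=
  ⟨CSDproof.csd_noetherian d, CSDproof.csd_noetherian_op d, CSDproof.csd_isDomain d,
    fun u => CSDproof.csd_units d u⟩
end

section
/- Let K be a field of characteristic zero and n ≥ 1. If every K-algebra endomorphism of the n-th Weyl algebra A_n(K) is bijective, then the Jacobian conjecture holds in n variables over K: every K-algebra endomorphism σ of the polynomial algebra K[t_1, …, t_n] whose Jacobian determinant det[∂σ(t_i)/∂t_j] is a nonzero constant polynomial (an element of K \ {0}) is bijective. -/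
/-- The defining relations of the `n`-th Weyl algebra `Aₙ(K)` on generators
`t₁, …, tₙ` (indexed by `Sum.inl`) and `x₁, …, xₙ` (indexed by `Sum.inr`):
`xᵢ tⱼ = tⱼ xᵢ + δᵢⱼ`, `xᵢ xⱼ = xⱼ xᵢ` and `tᵢ tⱼ = tⱼ tᵢ`. -/
def weylNRel (K : Type*) [Field K] (n : ℕ) :
    FreeAlgebra K (Fin n ⊕ Fin n) → FreeAlgebra K (Fin n ⊕ Fin n) → Prop := fun a b =>
  (∃ i j : Fin n,
    a = FreeAlgebra.ι K (Sum.inr i) * FreeAlgebra.ι K (Sum.inl j) ∧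
    b = FreeAlgebra.ι K (Sum.inl j) * FreeAlgebra.ι K (Sum.inr i) +
      (if i = j then 1 else 0)) ∨
  (∃ i j : Fin n,
    a = FreeAlgebra.ι K (Sum.inr i) * FreeAlgebra.ι K (Sum.inr j) ∧
    b = FreeAlgebra.ι K (Sum.inr j) * FreeAlgebra.ι K (Sum.inr i)) ∨
  (∃ i j : Fin n,
    a = FreeAlgebra.ι K (Sum.inl i) * FreeAlgebra.ι K (Sum.inl j) ∧
    b = FreeAlgebra.ι K (Sum.inl j) * FreeAlgebra.ι K (Sum.inl i))

/-- The `n`-th Weyl algebra `Aₙ(K)`. -/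
abbrev WeylN (K : Type*) [Field K] (n : ℕ) : Type _ := RingQuot (weylNRel K n)

noncomputable section

open MvPolynomial

namespace WeylNAux

lemma pderiv_comm {σ R : Type*} [CommSemiring R] (i j : σ) (p : MvPolynomial σ R) :
    pderiv i (pderiv j p) = pderiv j (pderiv i p) := by
  classical
  induction p using MvPolynomial.induction_on' with
  | add p q hp hq => simp [hp, hq]
  | monomial s a =>
    rcases eq_or_ne i j with rfl | hij
    · rfl
    · simp only [pderiv_monomial]
      rw [tsub_right_comm]
      congr 1
      have h1 : ((s - Finsupp.single j 1 : _ →₀ ℕ)) i = s i := by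
        simp [Finsupp.tsub_apply, Finsupp.single_apply, Ne.symm hij]
      have h2 : ((s - Finsupp.single i 1 : _ →₀ ℕ)) j = s j := by
        simp [Finsupp.tsub_apply, Finsupp.single_apply, hij]
      rw [h1, h2]; ring

variable (K : Type*) [Field K] (n : ℕ)

/-- the generator `t i` -/
def T (i : Fin n) : WeylN K n := RingQuot.mkAlgHom K _ (FreeAlgebra.ι K (Sum.inl i))

/-- the generator `x i` -/
def Xg (i : Fin n) : WeylN K n := RingQuot.mkAlgHom K _ (FreeAlgebra.ι K (Sum.inr i))

variable {K n}

lemma rel1 (i j : Fin n) :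
    Xg K n i * T K n j = T K n j * Xg K n i + (if i = j then 1 else 0) := by
  have := RingQuot.mkAlgHom_rel K (s := weylNRel K n)
    (Or.inl ⟨i, j, rfl, rfl⟩)
  simpa [T, Xg, apply_ite] using this

lemma rel2 (i j : Fin n) : Xg K n i * Xg K n j = Xg K n j * Xg K n i := by
  have := RingQuot.mkAlgHom_rel K (s := weylNRel K n)
    (Or.inr (Or.inl ⟨i, j, rfl, rfl⟩))
  simpa [Xg] using this

lemma rel3 (i j : Fin n) : T K n i * T K n j = T K n j * T K n i := by
  have := RingQuot.mkAlgHom_rel K (s := weylNRel K n)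
    (Or.inr (Or.inr ⟨i, j, rfl, rfl⟩))
  simpa [T] using this


variable (K n) in
/-- The commutative subalgebra generated by the `T i`. -/
def Tsub : Subalgebra K (WeylN K n) := Algebra.adjoin K (Set.range (T K n))

instance : CommRing (Tsub K n) :=
  { (Tsub K n).toRing with mul_comm := (Algebra.adjoinCommRingOfComm K
    (by rintro a ⟨i, rfl⟩ b ⟨j, rfl⟩; exact rel3 i j)).mul_comm }

variable (K n) in
/-- The polynomial subalgebra `K[t₁,…,tₙ] ⊆ Aₙ(K)`. -/
def ιt : MvPolynomial (Fin n) K →ₐ[K] WeylN K n :=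
  (Tsub K n).val.comp (aeval fun i => ⟨T K n i, Algebra.subset_adjoin ⟨i, rfl⟩⟩)

@[simp] lemma ιt_X (i : Fin n) : ιt K n (X i) = T K n i := by
  simp [ιt]

lemma ιt_comm (p q : MvPolynomial (Fin n) K) : ιt K n p * ιt K n q = ιt K n q * ιt K n p := by
  rw [← map_mul, ← map_mul, mul_comm]

variable (K n) in
/-- The commutative subalgebra generated by the `Xg i`. -/
def Xsub : Subalgebra K (WeylN K n) := Algebra.adjoin K (Set.range (Xg K n))

instance : CommRing (Xsub K n) :=
  { (Xsub K n).toRing with mul_comm := (Algebra.adjoinCommRingOfComm K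
    (by rintro a ⟨i, rfl⟩ b ⟨j, rfl⟩; exact rel2 i j)).mul_comm }

variable (K n) in
/-- The polynomial subalgebra `K[x₁,…,xₙ] ⊆ Aₙ(K)`. -/
def ξ : MvPolynomial (Fin n) K →ₐ[K] WeylN K n :=
  (Xsub K n).val.comp (aeval fun i => ⟨Xg K n i, Algebra.subset_adjoin ⟨i, rfl⟩⟩)

@[simp] lemma ξ_X (i : Fin n) : ξ K n (X i) = Xg K n i := by
  simp [ξ]

/-- Key commutation relation: `x_k · p(t) = p(t) · x_k + (∂p/∂t_k)(t)`. -/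
lemma Xg_mul_ιt (k : Fin n) (p : MvPolynomial (Fin n) K) :
    Xg K n k * ιt K n p = ιt K n p * Xg K n k + ιt K n (pderiv k p) := by
  induction p using MvPolynomial.induction_on with
  | C a =>
    rw [show ιt K n (C a) = algebraMap K _ a by simp [ιt, algebraMap_eq]]
    simp [Algebra.commutes]
  | add p q hp hq =>
    rw [map_add, mul_add, hp, hq, map_add, map_add, add_mul]
    abel
  | mul_X p i hp =>
    have hd : pderiv k (p * X i) = pderiv k p * X i + (if k = i then p else 0) := by
      rw [pderiv_mul]
      rcases eq_or_ne k i with rfl | h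
      · simp [mul_comm]
      · simp [pderiv_X_of_ne (Ne.symm h), h]
    rw [map_mul, ιt_X, ← mul_assoc, hp, add_mul, mul_assoc, rel1 k i, mul_add, ← mul_assoc,
      hd, map_add, map_mul, ιt_X, apply_ite (ιt K n), map_zero, mul_ite, mul_one, mul_zero]
    abel

lemma lmul_app {A : Type*} [CommSemiring A] [Algebra K A] (p q : A) :
    Algebra.lmul K A p q = p * q := rfl

variable (K n) in
/-- The representation of `Aₙ(K)` on `K[t₁,…,tₙ]`: `t i` acts by multiplication by `X i`,
`x i` acts by `∂/∂tᵢ`. -/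
def ρ : WeylN K n →ₐ[K] Module.End K (MvPolynomial (Fin n) K) :=
  RingQuot.liftAlgHom K ⟨FreeAlgebra.lift K (Sum.elim
      (fun j => Algebra.lmul K (MvPolynomial (Fin n) K) (X j))
      (fun i => (pderiv (R := K) i).toLinearMap)), by
    rintro a b (⟨i, j, rfl, rfl⟩ | ⟨i, j, rfl, rfl⟩ | ⟨i, j, rfl, rfl⟩) <;>
      simp only [map_mul, map_add, FreeAlgebra.lift_ι_apply, Sum.elim_inl, Sum.elim_inr,
        apply_ite (FreeAlgebra.lift K _), map_one, map_zero]
    · refine LinearMap.ext fun p => ?_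
      simp only [Module.End.mul_apply, Derivation.coeFn_coe, lmul_app,
        LinearMap.add_apply]
      rw [pderiv_mul]
      rcases eq_or_ne i j with rfl | h
      · simp [add_comm]
      · simp [pderiv_X_of_ne (Ne.symm h), h]
    · refine LinearMap.ext fun p => ?_
      simp only [Module.End.mul_apply, Derivation.coeFn_coe]
      exact pderiv_comm i j p
    · refine LinearMap.ext fun p => ?_
      simp only [Module.End.mul_apply, lmul_app]
      ring⟩

@[simp] lemma ρ_T (i : Fin n) :
    ρ K n (T K n i) = Algebra.lmul K (MvPolynomial (Fin n) K) (X i) := by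
  rw [ρ, T, RingQuot.liftAlgHom_mkAlgHom_apply, FreeAlgebra.lift_ι_apply]
  rfl

@[simp] lemma ρ_Xg (i : Fin n) :
    ρ K n (Xg K n i) = (pderiv (R := K) i).toLinearMap := by
  rw [ρ, Xg, RingQuot.liftAlgHom_mkAlgHom_apply, FreeAlgebra.lift_ι_apply]
  rfl

lemma ρ_ιt (p : MvPolynomial (Fin n) K) :
    ρ K n (ιt K n p) = Algebra.lmul K (MvPolynomial (Fin n) K) p := by
  have : (ρ K n).comp (ιt K n) = Algebra.lmul K (MvPolynomial (Fin n) K) := by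
    apply MvPolynomial.algHom_ext
    intro i
    simp
  exact DFunLike.congr_fun this p

lemma ιt_injective : Function.Injective (ιt K n) := by
  intro p q h
  have := congrArg (fun w => (ρ K n w) 1) h
  simpa [ρ_ιt] using this

variable (K n) in
/-- The monomial `x^β` in the Weyl algebra. -/
def Xm (β : Fin n →₀ ℕ) : WeylN K n := ξ K n (monomial β 1)

@[simp] lemma Xm_zero : Xm K n 0 = 1 := by
  simp [Xm, monomial_zero']

lemma Xg_mul_Xm (k : Fin n) (β : Fin n →₀ ℕ) :
    Xg K n k * Xm K n β = Xm K n (β + Finsupp.single k 1) := by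
  rw [Xm, Xm, ← ξ_X, ← map_mul]
  congr 1
  rw [show (X k : MvPolynomial (Fin n) K) = monomial (Finsupp.single k 1) 1 by
    rw [← X_pow_eq_monomial, pow_one], monomial_mul, one_mul, add_comm]

variable (K n) in
/-- Normal form summation map: `c ↦ Σ_β c_β(t) · x^β`. -/
def Θ : ((Fin n →₀ ℕ) →₀ MvPolynomial (Fin n) K) →ₗ[K] WeylN K n :=
  Finsupp.lsum K fun β =>
    (LinearMap.mulRight K (Xm K n β)).comp (ιt K n).toLinearMap

@[simp] lemma Θ_single (β : Fin n →₀ ℕ) (p : MvPolynomial (Fin n) K) :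
    Θ K n (Finsupp.single β p) = ιt K n p * Xm K n β := by
  rw [Θ, Finsupp.lsum_single]
  rfl

lemma T_mul_Θ (k : Fin n) (c : (Fin n →₀ ℕ) →₀ MvPolynomial (Fin n) K) :
    ∃ c', T K n k * Θ K n c = Θ K n c' := by
  induction c using Finsupp.induction_linear with
  | zero => exact ⟨0, by simp⟩
  | add c₁ c₂ h₁ h₂ =>
    obtain ⟨c₁', h₁⟩ := h₁; obtain ⟨c₂', h₂⟩ := h₂
    exact ⟨c₁' + c₂', by rw [map_add, mul_add, h₁, h₂, map_add]⟩
  | single β p =>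
    refine ⟨Finsupp.single β (X k * p), ?_⟩
    rw [Θ_single, Θ_single, ← mul_assoc, ← ιt_X (K := K) (n := n) k, ← map_mul]

lemma Xg_mul_Θ (k : Fin n) (c : (Fin n →₀ ℕ) →₀ MvPolynomial (Fin n) K) :
    ∃ c', Xg K n k * Θ K n c = Θ K n c' := by
  induction c using Finsupp.induction_linear with
  | zero => exact ⟨0, by simp⟩
  | add c₁ c₂ h₁ h₂ =>
    obtain ⟨c₁', h₁⟩ := h₁; obtain ⟨c₂', h₂⟩ := h₂
    exact ⟨c₁' + c₂', by rw [map_add, mul_add, h₁, h₂, map_add]⟩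
  | single β p =>
    refine ⟨Finsupp.single (β + Finsupp.single k 1) p + Finsupp.single β (pderiv k p), ?_⟩
    rw [Θ_single, ← mul_assoc, Xg_mul_ιt, add_mul, mul_assoc, Xg_mul_Xm, map_add,
      Θ_single, Θ_single]

lemma Θ_surjective : Function.Surjective (Θ K n) := by
  intro w
  have htop : Algebra.adjoin K (Set.range (T K n) ∪ Set.range (Xg K n)) = ⊤ := by
    have h1 : Algebra.adjoin K
        (Set.range (FreeAlgebra.ι K : (Fin n ⊕ Fin n) → FreeAlgebra K (Fin n ⊕ Fin n))) = ⊤ :=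
      FreeAlgebra.adjoin_range_ι K _
    have h2 := congrArg (Subalgebra.map (RingQuot.mkAlgHom K (weylNRel K n))) h1
    rw [AlgHom.map_adjoin] at h2
    rw [show Set.range (T K n) ∪ Set.range (Xg K n) =
        (RingQuot.mkAlgHom K (weylNRel K n)) ''
          (Set.range (FreeAlgebra.ι K : (Fin n ⊕ Fin n) → FreeAlgebra K (Fin n ⊕ Fin n))) from ?_]
    · rw [h2]
      rw [Algebra.map_top]
      exact (AlgHom.range_eq_top _).mpr (RingQuot.mkAlgHom_surjective K _)
    · rw [← Set.range_comp]
      have : (RingQuot.mkAlgHom K (weylNRel K n)) ∘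
          (FreeAlgebra.ι K : (Fin n ⊕ Fin n) → FreeAlgebra K (Fin n ⊕ Fin n)) =
          Sum.elim (T K n) (Xg K n) := by
        funext s; cases s <;> rfl
      rw [this, Set.Sum.elim_range]
  have hw : w ∈ Algebra.adjoin K (Set.range (T K n) ∪ Set.range (Xg K n)) := by
    rw [htop]; trivial
  have key : ∀ l : List (WeylN K n), (∀ y ∈ l, y ∈ Set.range (T K n) ∪ Set.range (Xg K n)) →
      ∃ c, Θ K n c = l.prod := by
    intro l
    induction l with
    | nil => exact fun _ => ⟨Finsupp.single 0 1, by simp⟩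
    | cons g l ih =>
      intro hl
      obtain ⟨c, hc⟩ := ih (fun y hy => hl y (List.mem_cons_of_mem _ hy))
      have hg := hl g List.mem_cons_self
      rw [List.prod_cons, ← hc]
      rcases hg with ⟨k, rfl⟩ | ⟨k, rfl⟩
      · obtain ⟨c', hc'⟩ := T_mul_Θ k c; exact ⟨c', hc'.symm⟩
      · obtain ⟨c', hc'⟩ := Xg_mul_Θ k c; exact ⟨c', hc'.symm⟩
  have hspan : w ∈ Submodule.span K
      ((Submonoid.closure (Set.range (T K n) ∪ Set.range (Xg K n)) : Submonoid (WeylN K n)) :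
        Set (WeylN K n)) := by
    have h := Algebra.adjoin_eq_span (R := K) (s := Set.range (T K n) ∪ Set.range (Xg K n))
    rw [← h]
    exact (Subalgebra.mem_toSubmodule _).mpr hw
  refine Submodule.span_induction ?_ ⟨0, map_zero _⟩ ?_ ?_ hspan
  · rintro u hu
    obtain ⟨l, hl, rfl⟩ := Submonoid.exists_list_of_mem_closure hu
    exact key l hl
  · rintro u v - - ⟨c₁, rfl⟩ ⟨c₂, rfl⟩
    exact ⟨c₁ + c₂, map_add _ _ _⟩
  · rintro a u - ⟨c, rfl⟩
    exact ⟨a • c, map_smul _ _ _⟩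

lemma nat_desc_succ (m b : ℕ) : m.descFactorial (b + 1) = m * (m - 1).descFactorial b := by
  cases m with
  | zero => simp [Nat.descFactorial]
  | succ m => rw [Nat.succ_descFactorial_succ]; simp

lemma pderiv_pow_monomial (a : Fin n) (b : ℕ) (β : Fin n →₀ ℕ) (r : K) :
    (((pderiv (R := K) a).toLinearMap : Module.End K (MvPolynomial (Fin n) K)) ^ b)
        (monomial β r) =
      monomial (β - Finsupp.single a b) (r * ((β a).descFactorial b : ℕ)) := by
  induction b generalizing β r with
  | zero => simp
  | succ b ih =>
    rw [pow_succ, Module.End.mul_apply]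
    have h1 : ((pderiv (R := K) a).toLinearMap : Module.End K (MvPolynomial (Fin n) K))
        (monomial β r) = monomial (β - Finsupp.single a 1) (r * (β a : ℕ)) := by
      simp [pderiv_monomial]
    rw [h1, ih]
    have h2 : β - Finsupp.single a 1 - Finsupp.single a b = β - Finsupp.single a (b + 1) := by
      rw [tsub_tsub, ← Finsupp.single_add, add_comm]
    have h3 : ((β - Finsupp.single a 1 : Fin n →₀ ℕ)) a = β a - 1 := by
      simp [Finsupp.tsub_apply]
    rw [h2, h3]
    congr 1
    rw [nat_desc_succ]
    push_cast
    ring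

lemma Xm_add (β γ : Fin n →₀ ℕ) : Xm K n (β + γ) = Xm K n β * Xm K n γ := by
  rw [Xm, Xm, Xm, ← map_mul, monomial_mul, one_mul]

lemma rho_Xm_single (a : Fin n) (b : ℕ) :
    ρ K n (Xm K n (Finsupp.single a b)) =
      ((pderiv (R := K) a).toLinearMap : Module.End K (MvPolynomial (Fin n) K)) ^ b := by
  rw [Xm, ← X_pow_eq_monomial, map_pow, map_pow, ξ_X, ρ_Xg]

lemma rho_Xm_monomial (γ β : Fin n →₀ ℕ) :
    ρ K n (Xm K n γ) (monomial β (1 : K)) =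
      monomial (β - γ) ((γ.prod fun a e => (β a).descFactorial e : ℕ) : K) := by
  induction γ using Finsupp.induction with
  | zero => simp
  | single_add a b f ha hb ih =>
    rw [Xm_add, map_mul, Module.End.mul_apply, ih, rho_Xm_single, pderiv_pow_monomial]
    have hfa : f a = 0 := Finsupp.notMem_support_iff.mp ha
    have h2 : β - f - Finsupp.single a b = β - (Finsupp.single a b + f) := by
      rw [tsub_tsub, add_comm]
    have h3 : ((β - f : Fin n →₀ ℕ)) a = β a := by simp [Finsupp.tsub_apply, hfa]
    rw [h2, h3]
    congr 1
    rw [Finsupp.prod, Finsupp.prod, Finsupp.support_single_add ha hb, Finset.prod_cons]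
    have hva : (Finsupp.single a b + f) a = b := by simp [hfa]
    have hvx : ∀ x ∈ f.support,
        (β x).descFactorial ((Finsupp.single a b + f) x) = (β x).descFactorial (f x) := by
      intro x hx
      have hxa : x ≠ a := fun h => ha (h ▸ hx)
      simp [Finsupp.single_apply, Ne.symm hxa]
    rw [hva, Finset.prod_congr rfl hvx]
    push_cast
    ring

lemma finsupp_eq_of_le {γ β : Fin n →₀ ℕ} (h : γ ≤ β)
    (hd : (β.sum fun _ m => m) ≤ γ.sum fun _ m => m) : γ = β := by
  have hpt : ∀ a, γ a ≤ β a := fun a => h a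
  have hsub : γ.support ⊆ β.support := by
    intro a haa
    rw [Finsupp.mem_support_iff] at *
    exact fun h0 => haa (Nat.le_zero.mp (h0 ▸ hpt a))
  have hγ : (γ.sum fun _ m => m) = ∑ a ∈ β.support, γ a := by
    rw [Finsupp.sum]
    exact Finset.sum_subset hsub fun x _ hx => Finsupp.notMem_support_iff.mp hx
  have hβs : (β.sum fun _ m => m) = ∑ a ∈ β.support, β a := rfl
  rw [hγ, hβs] at hd
  have hle : ∑ a ∈ β.support, γ a ≤ ∑ a ∈ β.support, β a :=
    Finset.sum_le_sum fun a _ => hpt a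
  have heq : ∑ a ∈ β.support, γ a = ∑ a ∈ β.support, β a := le_antisymm hle hd
  have hall := (Finset.sum_eq_sum_iff_of_le fun a _ => hpt a).mp heq
  ext a
  by_cases haa : a ∈ β.support
  · exact hall a haa
  · have hβ0 : β a = 0 := Finsupp.notMem_support_iff.mp haa
    exact Nat.le_zero.mp (hβ0 ▸ hpt a) |>.trans hβ0.symm

variable [CharZero K]

lemma theta_indep (c : (Fin n →₀ ℕ) →₀ MvPolynomial (Fin n) K)
    (h : ρ K n (Θ K n c) = 0) : c = 0 := by
  by_contra hc
  obtain ⟨β, hβ, hmin⟩ := Finset.exists_min_image c.support (fun γ => γ.sum fun _ m => m)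
    (Finsupp.support_nonempty_iff.mpr hc)
  have hΘ : Θ K n c = c.sum fun γ p => ιt K n p * Xm K n γ := by
    rw [Θ, Finsupp.lsum_apply]
    rfl
  have h0 : (∑ γ ∈ c.support, (ρ K n) (ιt K n (c γ) * Xm K n γ)) (monomial β (1 : K)) = 0 := by
    rw [show (∑ γ ∈ c.support, (ρ K n) (ιt K n (c γ) * Xm K n γ)) = ρ K n (Θ K n c) by
      rw [hΘ, map_finsuppSum, Finsupp.sum], h]
    rfl
  rw [LinearMap.coe_sum, Finset.sum_apply] at h0
  have hterm : ∀ γ ∈ c.support, γ ≠ β →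
      (ρ K n) (ιt K n (c γ) * Xm K n γ) (monomial β (1 : K)) = 0 := by
    intro γ hγ hne
    have hnle : ¬ γ ≤ β := fun hle => hne (finsupp_eq_of_le hle (hmin γ hγ))
    obtain ⟨a, halt⟩ : ∃ a, β a < γ a := by
      by_contra hno
      push_neg at hno
      exact hnle fun i => hno i
    have hcoef : (γ.prod fun a e => (β a).descFactorial e) = 0 := by
      apply Finset.prod_eq_zero (i := a)
      · rw [Finsupp.mem_support_iff]
        omega
      · exact Nat.descFactorial_eq_zero_iff_lt.mpr halt
    rw [map_mul, Module.End.mul_apply, rho_Xm_monomial, hcoef]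
    simp
  rw [Finset.sum_eq_single β hterm (fun hβ' => absurd hβ hβ')] at h0
  rw [map_mul, Module.End.mul_apply, rho_Xm_monomial, ρ_ιt, lmul_app] at h0
  have hne0 : ((β.prod fun a e => (β a).descFactorial e : ℕ) : K) ≠ 0 := by
    rw [Nat.cast_ne_zero, Finsupp.prod]
    apply Finset.prod_ne_zero_iff.mpr
    intro a _
    rw [Nat.descFactorial_self]
    exact (Nat.factorial_ne_zero _)
  rw [tsub_self] at h0
  have : c β = 0 ∨ (monomial (0 : Fin n →₀ ℕ)) ((β.prod fun a e => (β a).descFactorial e : ℕ) : K)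
      = 0 := mul_eq_zero.mp h0
  rcases this with h | h
  · exact Finsupp.mem_support_iff.mp hβ h
  · rw [monomial_zero', C_eq_zero] at h
    exact hne0 h

lemma mem_ιt_of_commute (w : WeylN K n) (hw : ∀ j, w * T K n j = T K n j * w) :
    ∃ p, w = ιt K n p := by
  have hX : ∀ j, ρ K n w * Algebra.lmul K (MvPolynomial (Fin n) K) (X j) =
      Algebra.lmul K (MvPolynomial (Fin n) K) (X j) * ρ K n w := by
    intro j
    have := congrArg (ρ K n) (hw j)
    rwa [map_mul, map_mul, ρ_T] at this
  have hcomm : ∀ p, ρ K n w * Algebra.lmul K (MvPolynomial (Fin n) K) p =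
      Algebra.lmul K (MvPolynomial (Fin n) K) p * ρ K n w := by
    intro p
    induction p using MvPolynomial.induction_on with
    | C a =>
      rw [show (C a : MvPolynomial (Fin n) K) = algebraMap K _ a from rfl, AlgHom.commutes]
      exact (Algebra.commutes a _).symm
    | add p q hp hq => rw [map_add, mul_add, add_mul, hp, hq]
    | mul_X p i hp =>
      rw [map_mul, ← mul_assoc, hp, mul_assoc, hX i, ← mul_assoc]
  obtain ⟨c, hc⟩ := Θ_surjective (K := K) (n := n) w
  set q := ρ K n w 1 with hq
  have hρ : ρ K n w = Algebra.lmul K (MvPolynomial (Fin n) K) q := by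
    refine LinearMap.ext fun r => ?_
    have h2 := congrFun (congrArg DFunLike.coe (hcomm r)) 1
    simp only [Module.End.mul_apply, lmul_app, mul_one] at h2
    rw [lmul_app, h2, ← hq, mul_comm]
  have h0 : ρ K n (Θ K n (c - Finsupp.single 0 q)) = 0 := by
    rw [map_sub, map_sub, hc, hρ, Θ_single, Xm_zero, mul_one, ρ_ιt, sub_self]
  have hcq : c = Finsupp.single 0 q := sub_eq_zero.mp (theta_indep _ h0)
  refine ⟨q, ?_⟩
  rw [← hc, hcq, Θ_single, Xm_zero, mul_one]

lemma key_E_zero {J B : Matrix (Fin n) (Fin n) (MvPolynomial (Fin n) K)}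
    {f : Fin n → MvPolynomial (Fin n) K}
    (hJ : ∀ j k, J j k = pderiv k (f j))
    (hJB : J * B = 1) (hBJ : B * J = 1) (i j l : Fin n) :
    ∑ k, (B k i * pderiv k (B l j) - B k j * pderiv k (B l i)) = 0 := by
  set E : Fin n → MvPolynomial (Fin n) K :=
    fun l'' => ∑ k, (B k i * pderiv k (B l'' j) - B k j * pderiv k (B l'' i)) with hE
  show E l = 0
  have hs1 : ∀ (k m q : Fin n),
      ∑ l', (J m l' * pderiv k (B l' q) + pderiv k (J m l') * B l' q) = 0 := by
    intro k m q
    have hentry : ∑ l', J m l' * B l' q = if m = q then 1 else 0 := by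
      have := (Matrix.ext_iff.mpr hJB) m q
      rwa [Matrix.mul_apply, Matrix.one_apply] at this
    have h := congrArg (pderiv k) hentry
    rw [map_sum] at h
    have hz : pderiv k (if m = q then (1 : MvPolynomial (Fin n) K) else 0) = 0 := by
      split <;> simp
    rw [hz] at h
    rw [← h]
    refine Finset.sum_congr rfl fun l' _ => ?_
    rw [pderiv_mul]
    ring
  have hG : ∀ (i' j' m : Fin n),
      ∑ k, ∑ l', (B k i' * (J m l' * pderiv k (B l' j'))
        + B k i' * B l' j' * pderiv k (pderiv l' (f m))) = 0 := by
    intro i' j' m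
    refine Finset.sum_eq_zero fun k _ => ?_
    have h := hs1 k m j'
    have heq : ∑ l', (B k i' * (J m l' * pderiv k (B l' j'))
        + B k i' * B l' j' * pderiv k (pderiv l' (f m))) =
        B k i' * ∑ l', (J m l' * pderiv k (B l' j') + pderiv k (J m l') * B l' j') := by
      rw [Finset.mul_sum]
      refine Finset.sum_congr rfl fun l' _ => ?_
      have hd : pderiv k (J m l') = pderiv k (pderiv l' (f m)) := by rw [hJ]
      rw [← hd]
      ring
    rw [heq, h, mul_zero]
  have hSym : ∀ m, ∑ k, ∑ l', B k i * B l' j * pderiv k (pderiv l' (f m)) =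
      ∑ k, ∑ l', B k j * B l' i * pderiv k (pderiv l' (f m)) := by
    intro m
    rw [Finset.sum_comm]
    refine Finset.sum_congr rfl fun k _ => Finset.sum_congr rfl fun l' _ => ?_
    rw [pderiv_comm]
    ring
  have split2 : ∀ (F G : Fin n → Fin n → MvPolynomial (Fin n) K),
      ∑ k, ∑ l', (F k l' + G k l') = (∑ k, ∑ l', F k l') + ∑ k, ∑ l', G k l' := by
    intro F G
    rw [← Finset.sum_add_distrib]
    exact Finset.sum_congr rfl fun k _ => Finset.sum_add_distrib
  have hJE : ∀ m, ∑ l', J m l' * E l' = 0 := by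
    intro m
    calc ∑ l', J m l' * E l'
        = ∑ l', ∑ k, (B k i * (J m l' * pderiv k (B l' j))
            - B k j * (J m l' * pderiv k (B l' i))) := by
          refine Finset.sum_congr rfl fun l' _ => ?_
          simp only [hE]
          rw [Finset.mul_sum]
          exact Finset.sum_congr rfl fun k _ => by ring
      _ = ∑ k, ∑ l', (B k i * (J m l' * pderiv k (B l' j))
            - B k j * (J m l' * pderiv k (B l' i))) := Finset.sum_comm
      _ = (∑ k, ∑ l', B k i * (J m l' * pderiv k (B l' j)))
          - ∑ k, ∑ l', B k j * (J m l' * pderiv k (B l' i)) := by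
          rw [← Finset.sum_sub_distrib]
          exact Finset.sum_congr rfl fun k _ => Finset.sum_sub_distrib _ _
      _ = 0 := by
          have h1 := hG i j m
          have h2 := hG j i m
          rw [split2] at h1 h2
          linear_combination h1 - h2 - hSym m
  have hBJe : ∀ l' l'', ∑ m, B l' m * J m l'' = if l' = l'' then 1 else 0 := by
    intro l' l''
    have := (Matrix.ext_iff.mpr hBJ) l' l''
    rwa [Matrix.mul_apply, Matrix.one_apply] at this
  calc E l = ∑ l', (if l = l' then 1 else 0) * E l' := by simp
    _ = ∑ l', (∑ m, B l m * J m l') * E l' := by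
        refine Finset.sum_congr rfl fun l' _ => by rw [hBJe]
    _ = ∑ l', ∑ m, B l m * (J m l' * E l') := by
        refine Finset.sum_congr rfl fun l' _ => ?_
        rw [Finset.sum_mul]
        exact Finset.sum_congr rfl fun m _ => by ring
    _ = ∑ m, ∑ l', B l m * (J m l' * E l') := Finset.sum_comm
    _ = ∑ m, B l m * ∑ l', J m l' * E l' := by
        refine Finset.sum_congr rfl fun m _ => (Finset.mul_sum _ _ _).symm
    _ = 0 := by
        refine Finset.sum_eq_zero fun m _ => ?_
        rw [hJE m, mul_zero]

lemma vecX_mul_ιt (v : Fin n → MvPolynomial (Fin n) K) (p : MvPolynomial (Fin n) K) :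
    (∑ k, ιt K n (v k) * Xg K n k) * ιt K n p =
      ιt K n p * (∑ k, ιt K n (v k) * Xg K n k) + ιt K n (∑ k, v k * pderiv k p) := by
  rw [Finset.sum_mul, Finset.mul_sum, map_sum, ← Finset.sum_add_distrib]
  refine Finset.sum_congr rfl fun k _ => ?_
  rw [map_mul, mul_assoc (ιt K n (v k)), Xg_mul_ιt, mul_add, ← mul_assoc,
    ιt_comm (v k) p, mul_assoc]

lemma vecX_mul_vecX (v w : Fin n → MvPolynomial (Fin n) K) :
    (∑ k, ιt K n (v k) * Xg K n k) * (∑ l, ιt K n (w l) * Xg K n l) =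
      (∑ k, ∑ l, ιt K n (v k * w l) * (Xg K n k * Xg K n l))
        + ∑ l, ιt K n (∑ k, v k * pderiv k (w l)) * Xg K n l := by
  rw [Finset.mul_sum]
  have step : ∀ l, (∑ k, ιt K n (v k) * Xg K n k) * (ιt K n (w l) * Xg K n l) =
      (∑ k, ιt K n (v k * w l) * (Xg K n k * Xg K n l))
        + ιt K n (∑ k, v k * pderiv k (w l)) * Xg K n l := by
    intro l
    rw [← mul_assoc, vecX_mul_ιt, add_mul, Finset.mul_sum, Finset.sum_mul]
    congr 1
    refine Finset.sum_congr rfl fun k _ => ?_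
    rw [map_mul, ιt_comm (v k) (w l)]
    simp only [mul_assoc]
  rw [Finset.sum_congr rfl fun l _ => step l, Finset.sum_add_distrib]
  congr 1
  exact Finset.sum_comm

variable (K n) in
/-- The endomorphism of the Weyl algebra induced by a polynomial map with Jacobian
matrix inverse `B`, on the free algebra. -/
def Phi0 (f : Fin n → MvPolynomial (Fin n) K)
    (B : Matrix (Fin n) (Fin n) (MvPolynomial (Fin n) K)) :
    FreeAlgebra K (Fin n ⊕ Fin n) →ₐ[K] WeylN K n :=
  FreeAlgebra.lift K (Sum.elim (fun j => ιt K n (f j))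
    (fun i => ∑ k, ιt K n (B k i) * Xg K n k))

lemma Phi0_rel {f : Fin n → MvPolynomial (Fin n) K}
    {J B : Matrix (Fin n) (Fin n) (MvPolynomial (Fin n) K)}
    (hJf : ∀ i j, J i j = pderiv j (f i))
    (hJB : J * B = 1) (hBJ : B * J = 1) :
    ∀ ⦃a b⦄, weylNRel K n a b → Phi0 K n f B a = Phi0 K n f B b := by
  have hJBe : ∀ j i, ∑ k, J j k * B k i = if j = i then 1 else 0 := by
    intro j i
    have := (Matrix.ext_iff.mpr hJB) j i
    rwa [Matrix.mul_apply, Matrix.one_apply] at this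
  rintro a b (⟨i, j, rfl, rfl⟩ | ⟨i, j, rfl, rfl⟩ | ⟨i, j, rfl, rfl⟩) <;>
    simp only [map_mul, map_add, apply_ite (Phi0 K n f B), map_one, map_zero,
      Phi0, FreeAlgebra.lift_ι_apply, Sum.elim_inl, Sum.elim_inr]
  · -- x t relation
    rw [vecX_mul_ιt]
    congr 1
    have hval : ∑ k, B k i * pderiv k (f j) = if i = j then 1 else 0 := by
      calc ∑ k, B k i * pderiv k (f j) = ∑ k, J j k * B k i := by
            refine Finset.sum_congr rfl fun k _ => ?_
            rw [hJf]; ring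
        _ = if j = i then 1 else 0 := hJBe j i
        _ = if i = j then 1 else 0 := by simp [eq_comm]
    rw [hval]
    rcases eq_or_ne i j with rfl | hne
    · simp
    · simp [hne]
  · -- x x relation
    rw [vecX_mul_vecX, vecX_mul_vecX]
    congr 1
    · rw [Finset.sum_comm]
      refine Finset.sum_congr rfl fun k _ => Finset.sum_congr rfl fun l _ => ?_
      rw [rel2, mul_comm (B l i)]
    · refine Finset.sum_congr rfl fun l _ => ?_
      congr 1
      have h0 := key_E_zero hJf hJB hBJ i j l
      rw [Finset.sum_sub_distrib, sub_eq_zero] at h0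
      exact congrArg (ιt K n) h0
  · exact ιt_comm _ _

variable (K n) in
/-- The induced endomorphism of the Weyl algebra. -/
def Phi (f : Fin n → MvPolynomial (Fin n) K)
    {J B : Matrix (Fin n) (Fin n) (MvPolynomial (Fin n) K)}
    (hJf : ∀ i j, J i j = pderiv j (f i))
    (hJB : J * B = 1) (hBJ : B * J = 1) :
    WeylN K n →ₐ[K] WeylN K n :=
  RingQuot.liftAlgHom K ⟨Phi0 K n f B, Phi0_rel hJf hJB hBJ⟩

lemma Phi_T {f : Fin n → MvPolynomial (Fin n) K}
    {J B : Matrix (Fin n) (Fin n) (MvPolynomial (Fin n) K)}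
    (hJf : ∀ i j, J i j = pderiv j (f i))
    (hJB : J * B = 1) (hBJ : B * J = 1) (j : Fin n) :
    Phi K n f hJf hJB hBJ (T K n j) = ιt K n (f j) := by
  rw [Phi, T, RingQuot.liftAlgHom_mkAlgHom_apply, Phi0, FreeAlgebra.lift_ι_apply, Sum.elim_inl]

end WeylNAux

open WeylNAux in
/-- If every `K`-algebra endomorphism of the `n`-th Weyl algebra
`Aₙ(K)` is bijective, then the Jacobian conjecture holds in `n` variables over `K`:
every endomorphism of `K[t₁, …, tₙ]` whose Jacobian determinant is a nonzero constant
is bijective. -/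
theorem weylN_dixmier_implies_jacobian (K : Type*) [Field K] [CharZero K]
    (n : ℕ) (hn : 1 ≤ n)
    (hD : ∀ Φ : WeylN K n →ₐ[K] WeylN K n, Function.Bijective Φ) :
    ∀ σ : MvPolynomial (Fin n) K →ₐ[K] MvPolynomial (Fin n) K,
      (∃ c : K, c ≠ 0 ∧
        (Matrix.of fun i j : Fin n =>
            MvPolynomial.pderiv j (σ (MvPolynomial.X i))).det = MvPolynomial.C c) →
      Function.Bijective σ := by
  classical
  rintro σ ⟨c, hc, hdet⟩
  set f : Fin n → MvPolynomial (Fin n) K := fun i => σ (X i) with hf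
  set J : Matrix (Fin n) (Fin n) (MvPolynomial (Fin n) K) :=
    Matrix.of fun i j => pderiv j (f i) with hJdef
  have hJdet : J.det = C c := hdet
  set B : Matrix (Fin n) (Fin n) (MvPolynomial (Fin n) K) := c⁻¹ • J.adjugate with hBdef
  have hCinv : c⁻¹ • (C c : MvPolynomial (Fin n) K) = 1 := by
    rw [Algebra.smul_def, show (algebraMap K (MvPolynomial (Fin n) K)) c⁻¹ = C c⁻¹ from rfl,
      ← map_mul, inv_mul_cancel₀ hc, map_one]
  have hJB : J * B = 1 := by
    rw [hBdef, Matrix.mul_smul, Matrix.mul_adjugate, hJdet, ← smul_assoc, hCinv, one_smul]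
  have hBJ : B * J = 1 := by
    rw [hBdef, Matrix.smul_mul, Matrix.adjugate_mul, hJdet, ← smul_assoc, hCinv, one_smul]
  have hJf : ∀ i j, J i j = pderiv j (f i) := fun _ _ => rfl
  obtain ⟨hinj, hsurj⟩ := hD (Phi K n f hJf hJB hBJ)
  have hΦι : ∀ p, Phi K n f hJf hJB hBJ (ιt K n p) = ιt K n (σ p) := by
    have hcomp : (Phi K n f hJf hJB hBJ).comp (ιt K n) = (ιt K n).comp σ := by
      apply MvPolynomial.algHom_ext
      intro i
      simp only [AlgHom.comp_apply, ιt_X]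
      rw [Phi_T]
    exact fun p => DFunLike.congr_fun hcomp p
  constructor
  · intro p q hpq
    apply ιt_injective (K := K) (n := n)
    apply hinj
    rw [hΦι, hΦι, hpq]
  · have hXmem : ∀ i, X i ∈ σ.range := by
      intro i
      obtain ⟨w, hw⟩ := hsurj (T K n i)
      have hcomm : ∀ j, w * T K n j = T K n j * w := by
        intro j
        apply hinj
        rw [map_mul, map_mul, hw, Phi_T,
          show T K n i = ιt K n (X i) from (ιt_X i).symm, ιt_comm]
      obtain ⟨p, rfl⟩ := mem_ιt_of_commute w hcomm
      have hι : ιt K n (σ p) = ιt K n (X i) := by rw [← hΦι, hw, ιt_X]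
      exact ⟨p, ιt_injective hι⟩
    have hrange : σ.range = ⊤ := by
      rw [eq_top_iff, ← MvPolynomial.adjoin_range_X]
      apply Algebra.adjoin_le
      rintro x ⟨i, rfl⟩
      exact hXmem i
    intro p
    have hp : p ∈ σ.range := hrange ▸ Algebra.mem_top
    obtain ⟨q, hq⟩ := hp
    exact ⟨q, hq⟩
end
end

section
/- Let p = p_0(t) + p_1(t)·x and q = q_0(t) + q_1(t)·x be elements of A_1(K), where p_0, p_1, q_0, q_1 ∈ K[X]. Then q·p = p·q + 1 in A_1(K) if and only if the identities q_1·p_0′ − p_1·q_0′ = 1 and q_1·p_1′ − p_1·q_1′ = 0 hold in K[X], where ′ denotes the formal derivative. -/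
/-- The defining relation of the first Weyl algebra `A₁(K)`: `x·t = t·x + 1`, where
`t` is the image of the generator `0` and `x` is the image of the generator `1`. -/
def weylRel (K : Type*) [Field K] :
    FreeAlgebra K (Fin 2) → FreeAlgebra K (Fin 2) → Prop := fun a b =>
  a = FreeAlgebra.ι K (1 : Fin 2) * FreeAlgebra.ι K (0 : Fin 2) ∧
  b = FreeAlgebra.ι K (0 : Fin 2) * FreeAlgebra.ι K (1 : Fin 2) + 1

/-- The first Weyl algebra `A₁(K)`: the quotient of the free algebra on two generators
`t, x` by the two-sided ideal generated by `x·t − t·x − 1`. -/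
abbrev Weyl (K : Type*) [Field K] : Type _ := RingQuot (weylRel K)

/-- The generator `t` of the first Weyl algebra. -/
noncomputable def wT (K : Type*) [Field K] : Weyl K :=
  RingQuot.mkAlgHom K (weylRel K) (FreeAlgebra.ι K (0 : Fin 2))

/-- The generator `x` of the first Weyl algebra. -/
noncomputable def wX (K : Type*) [Field K] : Weyl K :=
  RingQuot.mkAlgHom K (weylRel K) (FreeAlgebra.ι K (1 : Fin 2))

open Polynomial

noncomputable section WeylAux

variable (K : Type*) [Field K]

/-- Multiplication by `X` as an endomorphism of `K[X]`. -/
def weylM : Module.End K (Polynomial K) := Algebra.lmul K (Polynomial K) X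

/-- Derivative as an endomorphism of `K[X]`. -/
def weylD : Module.End K (Polynomial K) := Polynomial.derivative

lemma weylF_rel : ∀ ⦃a b : FreeAlgebra K (Fin 2)⦄, weylRel K a b →
    (FreeAlgebra.lift K ![weylM K, weylD K]) a =
    (FreeAlgebra.lift K ![weylM K, weylD K]) b := by
  rintro a b ⟨rfl, rfl⟩
  simp only [map_mul, map_add, map_one, FreeAlgebra.lift_ι_apply]
  show weylD K * weylM K = weylM K * weylD K + 1
  refine LinearMap.ext fun f => ?_
  simp only [weylD, weylM, Module.End.mul_apply, LinearMap.add_apply, Module.End.one_apply,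
    Algebra.coe_lmul_eq_mul, LinearMap.mul_apply', derivative_mul, derivative_X, one_mul, mul_one]
  ring

/-- The standard representation of the Weyl algebra on `K[X]`. -/
def weylRho : Weyl K →ₐ[K] Module.End K (Polynomial K) :=
  RingQuot.liftAlgHom K ⟨FreeAlgebra.lift K ![weylM K, weylD K], weylF_rel K⟩

lemma weylRho_wT : weylRho K (wT K) = weylM K := by
  rw [weylRho, wT, RingQuot.liftAlgHom_mkAlgHom_apply, FreeAlgebra.lift_ι_apply]
  rfl

lemma weylRho_wX : weylRho K (wX K) = weylD K := by
  rw [weylRho, wX, RingQuot.liftAlgHom_mkAlgHom_apply, FreeAlgebra.lift_ι_apply]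
  rfl

lemma wXT : wX K * wT K = wT K * wX K + 1 := by
  have h := RingQuot.mkAlgHom_rel K (s := weylRel K)
    (x := FreeAlgebra.ι K (1 : Fin 2) * FreeAlgebra.ι K (0 : Fin 2))
    (y := FreeAlgebra.ι K (0 : Fin 2) * FreeAlgebra.ι K (1 : Fin 2) + 1) ⟨rfl, rfl⟩
  simpa [wX, wT, map_mul, map_add, map_one] using h

lemma wX_aeval (f : Polynomial K) :
    wX K * aeval (wT K) f = aeval (wT K) f * wX K + aeval (wT K) (derivative f) := by
  induction f using Polynomial.induction_on with
  | C a =>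
      simp [Algebra.commutes]
  | add p q hp hq =>
      simp only [map_add, mul_add, add_mul, hp, hq]
      abel
  | monomial n a ih =>
      have hx : (C a * X ^ (n + 1) : Polynomial K) = (C a * X ^ n) * X := by ring
      have hd : derivative (C a * X ^ n * X : Polynomial K)
          = derivative (C a * X ^ n : Polynomial K) * X + C a * X ^ n := by
        rw [derivative_mul, derivative_X, mul_one]
      have hgx : aeval (wT K) (C a * X ^ n * X) = aeval (wT K) (C a * X ^ n) * wT K := by
        rw [map_mul, aeval_X]
      have hdx : aeval (wT K) (derivative (C a * X ^ n * X))
          = aeval (wT K) (derivative (C a * X ^ n)) * wT K + aeval (wT K) (C a * X ^ n) := by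
        rw [hd, map_add, map_mul, aeval_X]
      rw [hx, hgx, hdx, ← mul_assoc, ih, add_mul, mul_assoc, wXT]
      noncomm_ring

lemma weyl_prod_form (a0 a1 b0 b1 : Polynomial K) :
    (aeval (wT K) a0 + aeval (wT K) a1 * wX K) *
      (aeval (wT K) b0 + aeval (wT K) b1 * wX K) =
    aeval (wT K) (a0 * b0 + a1 * derivative b0) +
      aeval (wT K) (a0 * b1 + a1 * b0 + a1 * derivative b1) * wX K +
      aeval (wT K) (a1 * b1) * (wX K * wX K) := by
  have h0 := wX_aeval K b0
  have h1 := wX_aeval K b1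
  have e0 : aeval (wT K) a1 * wX K * aeval (wT K) b0
      = aeval (wT K) a1 * (aeval (wT K) b0 * wX K + aeval (wT K) (derivative b0)) := by
    rw [mul_assoc, h0]
  have e1 : aeval (wT K) a1 * wX K * (aeval (wT K) b1 * wX K)
      = aeval (wT K) a1 * ((aeval (wT K) b1 * wX K + aeval (wT K) (derivative b1)) * wX K) := by
    rw [mul_assoc, ← mul_assoc (wX K), h1]
  simp only [map_add, map_mul]
  rw [add_mul, mul_add, mul_add, e0, e1]
  noncomm_ring

lemma weyl_one_iff (a b : Polynomial K) :
    aeval (wT K) a + aeval (wT K) b * wX K = 1 ↔ a = 1 ∧ b = 0 := by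
  constructor
  · intro h
    have h' := congrArg (weylRho K) h
    simp only [map_add, map_mul, map_one, ← aeval_algHom_apply, weylRho_wT, weylRho_wX] at h'
    have key : ∀ c : Polynomial K, aeval (weylM K) c = Algebra.lmul K (Polynomial K) (aeval X c) := by
      intro c
      rw [weylM, aeval_algHom_apply]
    rw [key a, key b, aeval_X_left_apply, aeval_X_left_apply] at h'
    have e1 := congrArg (fun φ : Module.End K (Polynomial K) => φ (1 : Polynomial K)) h'
    have e2 := congrArg (fun φ : Module.End K (Polynomial K) => φ (X : Polynomial K)) h'
    simp only [LinearMap.add_apply, Module.End.mul_apply, Module.End.one_apply,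
      Algebra.coe_lmul_eq_mul, LinearMap.mul_apply', weylD] at e1 e2
    simp only [derivative_one, mul_zero, mul_one, add_zero] at e1
    simp only [derivative_X, mul_one] at e2
    refine ⟨e1, ?_⟩
    rw [e1, one_mul] at e2
    have e2' : (X : Polynomial K) + b = X + 0 := by simpa using e2
    exact add_left_cancel e2'
  · rintro ⟨rfl, rfl⟩
    simp

end WeylAux

/-- For `p = p₀(t) + p₁(t)·x` and `q = q₀(t) + q₁(t)·x` in `A₁(K)`,
the relation `q·p = p·q + 1` holds if and only if `q₁·p₀′ − p₁·q₀′ = 1` and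
`q₁·p₁′ − p₁·q₁′ = 0` in `K[X]`. -/
theorem weyl_linear_dixmier_iff (K : Type*) [Field K] [CharZero K]
    (p0 p1 q0 q1 : Polynomial K) :
    (Polynomial.aeval (wT K) q0 + Polynomial.aeval (wT K) q1 * wX K) *
        (Polynomial.aeval (wT K) p0 + Polynomial.aeval (wT K) p1 * wX K) =
      (Polynomial.aeval (wT K) p0 + Polynomial.aeval (wT K) p1 * wX K) *
        (Polynomial.aeval (wT K) q0 + Polynomial.aeval (wT K) q1 * wX K) + 1 ↔
    (q1 * Polynomial.derivative p0 - p1 * Polynomial.derivative q0 = 1 ∧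
     q1 * Polynomial.derivative p1 - p1 * Polynomial.derivative q1 = 0) := by
  set A := q1 * derivative p0 - p1 * derivative q0 with hA
  set B := q1 * derivative p1 - p1 * derivative q1 with hB
  have key : (aeval (wT K) q0 + aeval (wT K) q1 * wX K) *
        (aeval (wT K) p0 + aeval (wT K) p1 * wX K) =
      (aeval (wT K) p0 + aeval (wT K) p1 * wX K) *
        (aeval (wT K) q0 + aeval (wT K) q1 * wX K) +
      (aeval (wT K) A + aeval (wT K) B * wX K) := by
    rw [weyl_prod_form, weyl_prod_form]
    rw [show q0 * p0 + q1 * derivative p0 = (p0 * q0 + p1 * derivative q0) + A by rw [hA]; ring,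
      show q0 * p1 + q1 * p0 + q1 * derivative p1
          = (p0 * q1 + p1 * q0 + p1 * derivative q1) + B by rw [hB]; ring,
      show q1 * p1 = p1 * q1 by ring]
    simp only [map_add, add_mul]
    abel
  rw [key, add_right_inj]
  exact weyl_one_iff K A B
end

section
/- Let n ≥ 3 be odd and consider 𝒞𝒮𝒟_n(K). Let M be the (n−1) × (n−1) skew-symmetric matrix over K defined by M_{ik} = −d_{ki} if k < i, M_{ii} = 0, and M_{ik} = d_{ik} if k > i (for 1 ≤ i, k ≤ n−1), and let b = (d_{1n}, …, d_{n−1,n}) ∈ K^{n−1}. Suppose a_1, …, a_{n−1} ∈ K are such that p_n := a_1·x_1 + ⋯ + a_{n−1}·x_{n−1} satisfies p_n·x_i − x_i·p_n = d_{in}·1 in 𝒞𝒮𝒟_n(K) for every 1 ≤ i ≤ n−1. If det M ≠ 0, then the vector (a_1, …, a_{n−1}) equals M^{-1}·b (so the coefficients a_k are uniquely determined by the constants d_{ij}), and the K-algebra endomorphism of 𝒞𝒮𝒟_n(K) sending x_i ↦ x_i for 1 ≤ i ≤ n−1 and x_n ↦ p_n (which exists since x_1, …, x_{n−1}, p_n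 satisfy the defining relations) is not surjective. -/
/-- The generator `xᵢ` of `𝒞𝒮𝒟ₙ(K)`. -/
noncomputable def csdX (K : Type*) [Field K] {n : ℕ} (d : Fin n → Fin n → K)
    (i : Fin n) : CSD K d :=
  RingQuot.mkAlgHom K (csdRel K d) (FreeAlgebra.ι K i)

section helpers

variable {K : Type*} [Field K] {n : ℕ}

open MvPolynomial

/-- Multiplication by `X k` as a linear endomorphism. -/
noncomputable def csdT (K : Type*) [Field K] {n : ℕ} (k : Fin n) :
    Module.End K (MvPolynomial (Fin n) K) :=
  LinearMap.mulLeft K (MvPolynomial.X k)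

/-- The operator `∂ᵢ + ∑_{k>i} dᵢₖ Xₖ`. -/
noncomputable def csdY (K : Type*) [Field K] {n : ℕ} (d : Fin n → Fin n → K) (i : Fin n) :
    Module.End K (MvPolynomial (Fin n) K) :=
  (MvPolynomial.pderiv i).toLinearMap +
    ∑ k : Fin n, (if i < k then d i k else 0) • csdT K k

lemma csdT_comm (k l : Fin n) : csdT K k * csdT K l = csdT K l * csdT K k := by
  apply LinearMap.ext; intro f
  simp only [csdT, Module.End.mul_apply, LinearMap.mulLeft_apply]
  ring

lemma pderiv_csdT (i k : Fin n) :
    ((MvPolynomial.pderiv i).toLinearMap : Module.End K (MvPolynomial (Fin n) K)) * csdT K k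
      = csdT K k * (MvPolynomial.pderiv i).toLinearMap
        + (if i = k then (1 : Module.End K (MvPolynomial (Fin n) K)) else 0) := by
  apply LinearMap.ext; intro f
  by_cases h : i = k
  · subst h
    simp [csdT, Module.End.mul_apply, pderiv_mul]
  · simp [csdT, Module.End.mul_apply, pderiv_mul, pderiv_X_of_ne (Ne.symm h), h]

lemma pderiv_pderiv (i j : Fin n) (f : MvPolynomial (Fin n) K) :
    MvPolynomial.pderiv i (MvPolynomial.pderiv j f)
      = MvPolynomial.pderiv j (MvPolynomial.pderiv i f) := by
  induction f using MvPolynomial.induction_on with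
  | C a => simp
  | add p q hp hq => simp [hp, hq]
  | mul_X p q hp =>
    simp only [pderiv_mul, map_add, hp, pderiv_X, Pi.single_apply]
    split_ifs <;> simp <;> ring

lemma csdY_mul_csdT (d : Fin n → Fin n → K) (i k : Fin n) :
    csdY K d i * csdT K k = csdT K k * csdY K d i
      + (if i = k then (1 : Module.End K (MvPolynomial (Fin n) K)) else 0) := by
  unfold csdY
  rw [add_mul, mul_add, pderiv_csdT, Finset.sum_mul, Finset.mul_sum]
  have h : ∀ l ∈ Finset.univ, ((if i < l then d i l else 0) • csdT K l) * csdT K k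
      = csdT K k * ((if i < l then d i l else 0) • csdT K l) := by
    intro l _
    rw [smul_mul_assoc, mul_smul_comm, csdT_comm]
  rw [Finset.sum_congr rfl h]
  abel

lemma pderiv_mul_B (d : Fin n → Fin n → K) (i j : Fin n) :
    ((MvPolynomial.pderiv j).toLinearMap : Module.End K (MvPolynomial (Fin n) K)) *
        (∑ k : Fin n, (if i < k then d i k else 0) • csdT K k)
      = (∑ k : Fin n, (if i < k then d i k else 0) • csdT K k) *
          (MvPolynomial.pderiv j).toLinearMap
        + (if i < j then d i j else 0) • (1 : Module.End K (MvPolynomial (Fin n) K)) := by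
  rw [Finset.mul_sum, Finset.sum_mul]
  have h : ∀ l ∈ (Finset.univ : Finset (Fin n)),
      ((MvPolynomial.pderiv j).toLinearMap : Module.End K (MvPolynomial (Fin n) K)) *
          ((if i < l then d i l else 0) • csdT K l)
        = ((if i < l then d i l else 0) • csdT K l) * (MvPolynomial.pderiv j).toLinearMap
          + (if j = l then
              (if i < l then d i l else 0) • (1 : Module.End K (MvPolynomial (Fin n) K))
              else 0) := by
    intro l _
    rw [mul_smul_comm, pderiv_csdT, smul_add, smul_mul_assoc]
    congr 1
    by_cases h : j = l <;> simp [h]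
  rw [Finset.sum_congr rfl h, Finset.sum_add_distrib, Finset.sum_ite_eq]
  simp

lemma B_mul_B (d : Fin n → Fin n → K) (i j : Fin n) :
    (∑ k : Fin n, (if i < k then d i k else 0) • csdT K k) *
        (∑ k : Fin n, (if j < k then d j k else 0) • csdT K k)
      = (∑ k : Fin n, (if j < k then d j k else 0) • csdT K k) *
          (∑ k : Fin n, (if i < k then d i k else 0) • csdT K k) := by
  refine Commute.sum_left _ _ _ fun l _ => Commute.sum_right _ _ _ fun l' _ => ?_
  have hc : Commute (csdT K l) (csdT K l') := csdT_comm l l'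
  exact (hc.smul_left _).smul_right _

lemma pderiv_mul_pderiv (i j : Fin n) :
    ((MvPolynomial.pderiv j).toLinearMap : Module.End K (MvPolynomial (Fin n) K)) *
        (MvPolynomial.pderiv i).toLinearMap
      = (MvPolynomial.pderiv i).toLinearMap * (MvPolynomial.pderiv j).toLinearMap := by
  apply LinearMap.ext; intro f
  simp only [Module.End.mul_apply, Derivation.coeFn_coe]
  exact pderiv_pderiv j i f

lemma csdY_rel (d : Fin n → Fin n → K) {i j : Fin n} (hij : i < j) :
    csdY K d j * csdY K d i
      = csdY K d i * csdY K d j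
        + algebraMap K (Module.End K (MvPolynomial (Fin n) K)) (d i j) := by
  unfold csdY
  simp only [add_mul, mul_add]
  rw [pderiv_mul_pderiv i j, pderiv_mul_B d i j, pderiv_mul_B d j i, B_mul_B d j i,
    if_pos hij, if_neg (asymm hij), zero_smul, add_zero, Algebra.algebraMap_eq_smul_one]
  abel

/-- The representation `CSD K d → End(K[x₁,…,xₙ])`. -/
noncomputable def csdRep (K : Type*) [Field K] {n : ℕ} (d : Fin n → Fin n → K) :
    CSD K d →ₐ[K] Module.End K (MvPolynomial (Fin n) K) :=
  RingQuot.liftAlgHom K ⟨FreeAlgebra.lift K (csdY K d), by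
    rintro x y ⟨i, j, hij, rfl, rfl⟩
    simp only [map_mul, map_add, FreeAlgebra.lift_ι_apply, AlgHom.commutes]
    exact csdY_rel d hij⟩

lemma csdRep_X (d : Fin n → Fin n → K) (i : Fin n) :
    csdRep K d (csdX K d i) = csdY K d i := by
  unfold csdRep csdX
  rw [RingQuot.liftAlgHom_mkAlgHom_apply, FreeAlgebra.lift_ι_apply]

lemma csd_algebraMap_injective (d : Fin n → Fin n → K) :
    Function.Injective (algebraMap K (CSD K d)) := by
  intro x y h
  have h1 : algebraMap K (Module.End K (MvPolynomial (Fin n) K)) x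
      = algebraMap K (Module.End K (MvPolynomial (Fin n) K)) y := by
    have := congrArg (csdRep K d) h
    rwa [AlgHom.commutes, AlgHom.commutes] at this
  have h2 : x • (1 : MvPolynomial (Fin n) K) = y • (1 : MvPolynomial (Fin n) K) := by
    have := congrArg (fun F => F (1 : MvPolynomial (Fin n) K)) h1
    simpa [Module.algebraMap_end_apply] using this
  exact smul_left_injective K (one_ne_zero) h2

lemma csdX_rel (d : Fin n → Fin n → K) {i j : Fin n} (h : i < j) :
    csdX K d j * csdX K d i
      = csdX K d i * csdX K d j + algebraMap K (CSD K d) (d i j) := by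
  have := RingQuot.mkAlgHom_rel K (s := csdRel K d) ⟨i, j, h, rfl, rfl⟩
  simpa only [map_mul, map_add, AlgHom.commutes, csdX] using this

lemma csdX_comm (d : Fin n → Fin n → K) (i k : Fin n) :
    csdX K d k * csdX K d i - csdX K d i * csdX K d k
      = algebraMap K (CSD K d)
          (if i < k then d i k else if k < i then -(d k i) else 0) := by
  rcases lt_trichotomy i k with h | h | h
  · rw [if_pos h, csdX_rel d h]
    abel
  · subst h
    simp
  · rw [if_neg (asymm h), if_pos h, csdX_rel d h, map_neg]
    abel

end helpers

/-- Let `n = m + 1 ≥ 3` be odd and consider `𝒞𝒮𝒟ₙ(K)`.  Let `M` be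
the `(n−1) × (n−1)` skew-symmetric matrix with `M i k = −d k i` for `k < i`, `0` on the
diagonal and `d i k` for `i < k`, and let `b = (d₁ₙ, …, d_{n−1,n})`.  Suppose
`pₙ := a₁·x₁ + ⋯ + a_{n−1}·x_{n−1}` satisfies `pₙ·xᵢ − xᵢ·pₙ = d_{i,n}` for all
`i ≤ n − 1`.  If `det M ≠ 0`, then `a = M⁻¹·b`, and the `K`-algebra endomorphism
sending `xᵢ ↦ xᵢ` (`i ≤ n−1`) and `xₙ ↦ pₙ` exists and is not surjective. -/
theorem csd_odd_not_dixmier (K : Type*) [Field K] [CharZero K]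
    (m : ℕ) (hm : 2 ≤ m) (hodd : Odd (m + 1))
    (d : Fin (m + 1) → Fin (m + 1) → K)
    (hd : ∀ i j : Fin (m + 1), i < j → d i j ≠ 0)
    (M : Matrix (Fin m) (Fin m) K)
    (hM : ∀ i k : Fin m, M i k =
      if k < i then -(d k.castSucc i.castSucc)
      else if i < k then d i.castSucc k.castSucc
      else 0)
    (b : Fin m → K) (hb : ∀ i : Fin m, b i = d i.castSucc (Fin.last m))
    (a : Fin m → K)
    (hcomm : ∀ i : Fin m,
      (∑ k : Fin m, a k • csdX K d k.castSucc) * csdX K d i.castSucc -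
        csdX K d i.castSucc * (∑ k : Fin m, a k • csdX K d k.castSucc) =
      algebraMap K (CSD K d) (d i.castSucc (Fin.last m)))
    (hdet : M.det ≠ 0) :
    a = M⁻¹.mulVec b ∧
    (∃ φ : CSD K d →ₐ[K] CSD K d,
      (∀ i : Fin m, φ (csdX K d i.castSucc) = csdX K d i.castSucc) ∧
      φ (csdX K d (Fin.last m)) = ∑ k : Fin m, a k • csdX K d k.castSucc) ∧
    (∀ φ : CSD K d →ₐ[K] CSD K d,
      (∀ i : Fin m, φ (csdX K d i.castSucc) = csdX K d i.castSucc) →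
      φ (csdX K d (Fin.last m)) = ∑ k : Fin m, a k • csdX K d k.castSucc →
      ¬ Function.Surjective φ) := by
  -- Step 1 : `M.mulVec a = b`.
  have hMa : M.mulVec a = b := by
    funext i
    apply csd_algebraMap_injective d
    have expand : (∑ k : Fin m, a k • csdX K d k.castSucc) * csdX K d i.castSucc -
        csdX K d i.castSucc * (∑ k : Fin m, a k • csdX K d k.castSucc)
        = algebraMap K (CSD K d) (M.mulVec a i) := by
      rw [Finset.sum_mul, Finset.mul_sum, ← Finset.sum_sub_distrib]
      have step : ∀ k ∈ (Finset.univ : Finset (Fin m)),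
          (a k • csdX K d k.castSucc) * csdX K d i.castSucc -
            csdX K d i.castSucc * (a k • csdX K d k.castSucc)
          = algebraMap K (CSD K d) (M i k * a k) := by
        intro k _
        rw [smul_mul_assoc, mul_smul_comm]
        rw [show a k • (csdX K d k.castSucc * csdX K d i.castSucc) -
              a k • (csdX K d i.castSucc * csdX K d k.castSucc)
            = a k • (csdX K d k.castSucc * csdX K d i.castSucc -
                csdX K d i.castSucc * csdX K d k.castSucc) from (smul_sub (a k) (csdX K d k.castSucc * csdX K d i.castSucc)
                  (csdX K d i.castSucc * csdX K d k.castSucc)).symm]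
        rw [csdX_comm d i.castSucc k.castSucc]
        have hMik : M i k
            = (if i.castSucc < k.castSucc then d i.castSucc k.castSucc
              else if k.castSucc < i.castSucc then -(d k.castSucc i.castSucc) else 0) := by
          rw [hM i k]
          rcases lt_trichotomy i k with h | h | h
          · simp [h, asymm h, Fin.castSucc_lt_castSucc_iff, not_lt_of_gt h]
          · subst h; simp
          · simp [h, asymm h, Fin.castSucc_lt_castSucc_iff, not_lt_of_gt h]
        rw [← hMik, Algebra.smul_def, ← map_mul, mul_comm (a k) (M i k)]
      rw [Finset.sum_congr rfl step, ← map_sum]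
      congr 1
      all_goals simp [Matrix.mulVec, dotProduct]
    rw [← expand, hcomm i, hb i]
  have part1 : a = M⁻¹.mulVec b := by
    rw [← hMa, Matrix.mulVec_mulVec, Matrix.nonsing_inv_mul M (isUnit_iff_ne_zero.mpr hdet),
      Matrix.one_mulVec]
  -- Step 2 : existence of `φ`.
  set p : CSD K d := ∑ k : Fin m, a k • csdX K d k.castSucc with hp
  have hlast_ne : ∀ j : Fin m, j.castSucc ≠ Fin.last m := fun j =>
    Fin.ne_of_lt (Fin.castSucc_lt_last j)
  set f : Fin (m + 1) → CSD K d :=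
    fun i => if i = Fin.last m then p else csdX K d i with hf
  have hfcast : ∀ j : Fin m, f j.castSucc = csdX K d j.castSucc := by
    intro j; simp [hf, hlast_ne j]
  have hflast : f (Fin.last m) = p := by simp [hf]
  have hrel : ∀ ⦃x y⦄, csdRel K d x y →
      (FreeAlgebra.lift K f) x = (FreeAlgebra.lift K f) y := by
    rintro x y ⟨i, j, hij, rfl, rfl⟩
    simp only [map_mul, map_add, FreeAlgebra.lift_ι_apply, AlgHom.commutes]
    rcases eq_or_ne j (Fin.last m) with rfl | hj
    · obtain ⟨i', rfl⟩ := Fin.exists_castSucc_eq.mpr (Fin.ne_of_lt hij)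
      rw [hflast, hfcast i']
      have h := hcomm i'
      rw [sub_eq_iff_eq_add.mp h]
      abel
    · obtain ⟨j', rfl⟩ := Fin.exists_castSucc_eq.mpr hj
      obtain ⟨i', rfl⟩ :=
        Fin.exists_castSucc_eq.mpr (Fin.ne_of_lt (hij.trans (Fin.castSucc_lt_last j')))
      rw [hfcast i', hfcast j']
      exact csdX_rel d hij
  set φ₀ : CSD K d →ₐ[K] CSD K d :=
    RingQuot.liftAlgHom K ⟨FreeAlgebra.lift K f, hrel⟩ with hφ₀
  have hφ₀X : ∀ i : Fin (m + 1), φ₀ (csdX K d i) = f i := by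
    intro i
    rw [hφ₀, csdX, RingQuot.liftAlgHom_mkAlgHom_apply, FreeAlgebra.lift_ι_apply]
  refine ⟨part1, ⟨φ₀, fun i => by rw [hφ₀X, hfcast], by rw [hφ₀X, hflast]⟩, ?_⟩
  -- Step 3 : non-surjectivity.
  intro φ hfix hlastφ hsurj
  set T : Module.End K (MvPolynomial (Fin (m + 1)) K) := csdT K (Fin.last m) with hT
  have hYmem : ∀ j : Fin m, csdY K d j.castSucc ∈ Subalgebra.centralizer K {T} := by
    intro j
    rw [Subalgebra.mem_centralizer_iff]
    rintro g rfl
    have := csdY_mul_csdT d j.castSucc (Fin.last m)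
    rw [if_neg (hlast_ne j), add_zero] at this
    exact this.symm
  have hmem : ∀ v : CSD K d, csdRep K d (φ v) ∈ Subalgebra.centralizer K {T} := by
    intro v
    obtain ⟨w, rfl⟩ := RingQuot.mkAlgHom_surjective K (csdRel K d) v
    induction w using FreeAlgebra.induction with
    | grade0 r =>
      rw [AlgHom.commutes, AlgHom.commutes, AlgHom.commutes]
      exact Subalgebra.algebraMap_mem _ r
    | grade1 i =>
      have hXi : RingQuot.mkAlgHom K (csdRel K d) (FreeAlgebra.ι K i) = csdX K d i := rfl
      rw [hXi]
      induction i using Fin.lastCases with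
      | last =>
        rw [hlastφ, map_sum]
        apply Subalgebra.sum_mem
        intro k _
        rw [map_smul, csdRep_X]
        exact Subalgebra.smul_mem _ (hYmem k) _
      | cast j =>
        rw [hfix j, csdRep_X]
        exact hYmem j
    | mul x y hx hy =>
      simp only [map_mul]
      exact mul_mem hx hy
    | add x y hx hy =>
      simp only [map_add]
      exact add_mem hx hy
  obtain ⟨u, hu⟩ := hsurj (csdX K d (Fin.last m))
  have hmem' := hmem u
  rw [hu, csdRep_X] at hmem'
  rw [Subalgebra.mem_centralizer_iff] at hmem'
  have hcomm' : T * csdY K d (Fin.last m) = csdY K d (Fin.last m) * T :=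
    hmem' T rfl
  have hkey := csdY_mul_csdT d (Fin.last m) (Fin.last m)
  rw [if_pos rfl, hcomm'] at hkey
  have h10 : (1 : Module.End K (MvPolynomial (Fin (m + 1)) K)) = 0 :=
    (left_eq_add.mp hkey)
  have hfin := congrArg (fun F => F (1 : MvPolynomial (Fin (m + 1)) K)) h10
  simp only [Module.End.one_apply, LinearMap.zero_apply] at hfin
  exact one_ne_zero hfin
end

section
/- Consider 𝒞𝒮𝒟_3(K) with constants d_{12}, d_{13}, d_{23} ∈ K \ {0}. If a_1, a_2 ∈ K are such that p_3 := a_1·x_1 + a_2·x_2 satisfies p_3·x_1 − x_1·p_3 = d_{13}·1 and p_3·x_2 − x_2·p_3 = d_{23}·1 in 𝒞𝒮𝒟_3(K), then a_1 = −d_{23}/d_{12} and a_2 = d_{13}/d_{12}; moreover, the K-algebra endomorphism of 𝒞𝒮𝒟_3(K) sending x_1 ↦ x_1, x_2 ↦ x_2 and x_3 ↦ −(d_{23}/d_{12})·x_1 + (d_{13}/d_{12})·x_2 exists and is not surjective. In particular, not every K-algebra endomorphism of 𝒞𝒮𝒟_3(K) is bijective, so 𝒞𝒮𝒟_3(K)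 is not a Dixmier algebra. -/
section CSDAux
open Polynomial

noncomputable def csdM (K : Type*) [Field K] : Module.End K (Polynomial K) :=
  LinearMap.mulLeft K Polynomial.X

noncomputable def csdD (K : Type*) [Field K] : Module.End K (Polynomial K) :=
  Polynomial.derivative

lemma csd_key (K : Type*) [Field K] : csdD K * csdM K = csdM K * csdD K + 1 := by
  apply LinearMap.ext; intro p
  simp [csdD, csdM, Module.End.mul_apply, derivative_mul, add_comm]

lemma csd_instNontriv (K : Type*) [Field K] : Nontrivial (Module.End K (Polynomial K)) :=
  ⟨1, 0, fun hh => one_ne_zero (α := Polynomial K) (by simpa using LinearMap.congr_fun hh 1)⟩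

lemma csd_algE (K : Type*) [Field K] (c : K) :
    algebraMap K (Module.End K (Polynomial K)) c = c • 1 := by
  rw [Module.algebraMap_end_eq_smul_id]; rfl

lemma csd_comm {K : Type*} [Field K] {n : ℕ} (d : Fin n → Fin n → K) {i j : Fin n}
    (h : i < j) :
    csdX K d j * csdX K d i = csdX K d i * csdX K d j + algebraMap K (CSD K d) (d i j) := by
  have := RingQuot.mkAlgHom_rel K (s := csdRel K d) ⟨i, j, h, rfl, rfl⟩
  simpa [csdX, map_mul, map_add, AlgHom.commutes] using this

lemma csdRep_exists {K : Type*} [Field K] (d : Fin 3 → Fin 3 → K) (h01 : d 0 1 ≠ 0) :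
    ∃ Ψ : CSD K d →ₐ[K] Polynomial (Module.End K (Polynomial K)),
      Ψ (csdX K d 0) = C (csdM K) ∧
      Ψ (csdX K d 1) = C (d 0 1 • csdD K) ∧
      Ψ (csdX K d 2) = C (d 0 2 • csdD K - (d 1 2 / d 0 1) • csdM K) + X := by
  set M := csdM K with hM
  set D := csdD K with hD
  have key := csd_key K
  rw [← hM, ← hD] at key
  set c := d 1 2 / d 0 1 with hcdef
  have hc : c * d 0 1 = d 1 2 := div_mul_cancel₀ _ h01
  set A2 : Module.End K (Polynomial K) := d 0 2 • D - c • M with hA2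
  have E01 : (d 0 1 • D) * M = M * (d 0 1 • D) + d 0 1 • 1 := by
    simp only [smul_mul_assoc, mul_smul_comm, key, smul_add]
  have E02 : A2 * M = M * A2 + d 0 2 • 1 := by
    simp only [hA2, sub_mul, mul_sub, smul_mul_assoc, mul_smul_comm, key, smul_add, smul_sub]
    module
  have E12 : A2 * (d 0 1 • D) = (d 0 1 • D) * A2 + d 1 2 • 1 := by
    simp only [hA2, sub_mul, mul_sub, smul_mul_assoc, mul_smul_comm, key, smul_add,
      smul_sub, smul_smul, mul_one]
    rw [← hc]; module
  set h : Fin 3 → Polynomial (Module.End K (Polynomial K)) :=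
    ![C M, C (d 0 1 • D), C A2 + X] with hh
  have hrel : ∀ ⦃x y⦄, csdRel K d x y → FreeAlgebra.lift K h x = FreeAlgebra.lift K h y := by
    rintro x y ⟨i, j, hij, rfl, rfl⟩
    simp only [map_mul, map_add, FreeAlgebra.lift_ι_apply, AlgHom.commutes,
      Polynomial.algebraMap_apply, csd_algE]
    fin_cases i <;> fin_cases j
    · exact absurd hij (by decide)
    · show C (d 0 1 • D) * C M = C M * C (d 0 1 • D) + C (d 0 1 • 1)
      rw [← C_mul, ← C_mul, ← C_add, C_inj]; exact E01
    · show (C A2 + X) * C M = C M * (C A2 + X) + C (d 0 2 • 1)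
      rw [add_mul, mul_add, X_mul, ← C_mul, ← C_mul, E02, C_add]; abel
    · exact absurd hij (by decide)
    · exact absurd hij (by decide)
    · show (C A2 + X) * C (d 0 1 • D) = C (d 0 1 • D) * (C A2 + X) + C (d 1 2 • 1)
      rw [add_mul, mul_add, X_mul, ← C_mul, ← C_mul, E12, C_add]; abel
    · exact absurd hij (by decide)
    · exact absurd hij (by decide)
    · exact absurd hij (by decide)
  have app : ∀ i, (RingQuot.liftAlgHom K ⟨FreeAlgebra.lift K h, hrel⟩) (csdX K d i) = h i :=
    fun i => by
      simp only [csdX]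
      rw [RingQuot.liftAlgHom_mkAlgHom_apply, FreeAlgebra.lift_ι_apply]
  exact ⟨_, by rw [app 0]; rfl, by rw [app 1]; rfl, by rw [app 2]; rfl⟩

lemma csd_algebraMap_inj {K : Type*} [Field K] (d : Fin 3 → Fin 3 → K) (h01 : d 0 1 ≠ 0) :
    Function.Injective (algebraMap K (CSD K d)) := by
  obtain ⟨Ψ, -, -, -⟩ := csdRep_exists d h01
  intro c c' h
  have h2 := congrArg Ψ h
  rw [AlgHom.commutes, AlgHom.commutes] at h2
  haveI := csd_instNontriv K
  exact (algebraMap K (Polynomial (Module.End K (Polynomial K)))).injective h2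

lemma csdPhi_exists {K : Type*} [Field K] (d : Fin 3 → Fin 3 → K) (h01 : d 0 1 ≠ 0) :
    ∃ φ : CSD K d →ₐ[K] CSD K d,
      φ (csdX K d 0) = csdX K d 0 ∧ φ (csdX K d 1) = csdX K d 1 ∧
      φ (csdX K d 2) = (-(d 1 2 / d 0 1)) • csdX K d 0 + (d 0 2 / d 0 1) • csdX K d 1 := by
  set x0 := csdX K d 0 with hx0
  set x1 := csdX K d 1 with hx1
  set q : CSD K d := (-(d 1 2 / d 0 1)) • x0 + (d 0 2 / d 0 1) • x1 with hq
  have comm01 : x1 * x0 = x0 * x1 + algebraMap K (CSD K d) (d 0 1) :=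
    csd_comm d (show (0 : Fin 3) < 1 by decide)
  have hs : ∀ e : K, (e / d 0 1) • algebraMap K (CSD K d) (d 0 1) =
      algebraMap K (CSD K d) e := fun e => by
    rw [Algebra.smul_def, ← map_mul, div_mul_cancel₀ _ h01]
  set g : Fin 3 → CSD K d := ![x0, x1, q] with hg
  have hrel : ∀ ⦃x y⦄, csdRel K d x y → FreeAlgebra.lift K g x = FreeAlgebra.lift K g y := by
    rintro x y ⟨i, j, hij, rfl, rfl⟩
    simp only [map_mul, map_add, FreeAlgebra.lift_ι_apply, AlgHom.commutes]
    fin_cases i <;> fin_cases j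
    · exact absurd hij (by decide)
    · exact comm01
    · show q * x0 = x0 * q + algebraMap K (CSD K d) (d 0 2)
      rw [hq]
      simp only [add_mul, mul_add, smul_mul_assoc, mul_smul_comm, comm01, smul_add]
      rw [hs]
      module
    · exact absurd hij (by decide)
    · exact absurd hij (by decide)
    · show q * x1 = x1 * q + algebraMap K (CSD K d) (d 1 2)
      rw [hq]
      simp only [add_mul, mul_add, smul_mul_assoc, mul_smul_comm, comm01, smul_add,
        neg_smul, smul_neg]
      have : (d 1 2 / d 0 1) • algebraMap K (CSD K d) (d 0 1) =
          algebraMap K (CSD K d) (d 1 2) := hs _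
      rw [← this]
      module
    · exact absurd hij (by decide)
    · exact absurd hij (by decide)
    · exact absurd hij (by decide)
  have app : ∀ i, (RingQuot.liftAlgHom K ⟨FreeAlgebra.lift K g, hrel⟩) (csdX K d i) = g i :=
    fun i => by
      simp only [csdX]
      rw [RingQuot.liftAlgHom_mkAlgHom_apply, FreeAlgebra.lift_ι_apply]
  exact ⟨_, by rw [app 0]; rfl, by rw [app 1]; rfl, by rw [app 2]; rfl⟩

lemma csdPhi_not_surj {K : Type*} [Field K] (d : Fin 3 → Fin 3 → K) (h01 : d 0 1 ≠ 0)
    (φ : CSD K d →ₐ[K] CSD K d)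
    (hφ0 : φ (csdX K d 0) = csdX K d 0) (hφ1 : φ (csdX K d 1) = csdX K d 1)
    (hφ2 : φ (csdX K d 2) =
      (-(d 1 2 / d 0 1)) • csdX K d 0 + (d 0 2 / d 0 1) • csdX K d 1) :
    ¬ Function.Surjective φ := by
  intro hsurj
  obtain ⟨Ψ, hΨ0, hΨ1, hΨ2⟩ := csdRep_exists d h01
  have hrange : ∀ v : FreeAlgebra K (Fin 3),
      ∃ e, Ψ (φ (RingQuot.mkAlgHom K (csdRel K d) v)) = C e := by
    intro v
    induction v using FreeAlgebra.induction with
    | grade0 r =>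
        exact ⟨algebraMap K _ r, by
          simp [AlgHom.commutes, Polynomial.algebraMap_apply]⟩
    | grade1 i =>
        have hx : RingQuot.mkAlgHom K (csdRel K d) (FreeAlgebra.ι K i) = csdX K d i := rfl
        rw [hx]
        fin_cases i
        · exact ⟨csdM K, by show Ψ (φ (csdX K d 0)) = _; rw [hφ0, hΨ0]⟩
        · exact ⟨d 0 1 • csdD K, by show Ψ (φ (csdX K d 1)) = _; rw [hφ1, hΨ1]⟩
        · refine ⟨(-(d 1 2 / d 0 1)) • csdM K + (d 0 2 / d 0 1) • (d 0 1 • csdD K), ?_⟩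
          show Ψ (φ (csdX K d 2)) = _
          rw [hφ2, map_add, map_smul, map_smul, hΨ0, hΨ1, smul_C, smul_C, ← C_add]
    | mul a b ha hb =>
        obtain ⟨e, he⟩ := ha; obtain ⟨e', he'⟩ := hb
        exact ⟨e * e', by simp only [map_mul, he, he', C_mul]⟩
    | add a b ha hb =>
        obtain ⟨e, he⟩ := ha; obtain ⟨e', he'⟩ := hb
        exact ⟨e + e', by simp only [map_add, he, he', C_add]⟩
  obtain ⟨u, hu⟩ := hsurj (csdX K d 2)
  obtain ⟨v, rfl⟩ := RingQuot.mkAlgHom_surjective K (csdRel K d) u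
  obtain ⟨e, he⟩ := hrange v
  rw [hu, hΨ2] at he
  have hcoeff := congrArg (fun p => Polynomial.coeff p 1) he
  haveI := csd_instNontriv K
  simp only [coeff_add, coeff_C, coeff_X_one] at hcoeff
  exact one_ne_zero (α := Module.End K (Polynomial K)) (by simpa using hcoeff)

end CSDAux

/-- Consider `𝒞𝒮𝒟₃(K)` with generators `x₁ = x 0`, `x₂ = x 1`,
`x₃ = x 2` and constants `d₁₂ = d 0 1`, `d₁₃ = d 0 2`, `d₂₃ = d 1 2`.  If
`p₃ := a₁·x₁ + a₂·x₂` satisfies `p₃·x₁ − x₁·p₃ = d₁₃` and `p₃·x₂ − x₂·p₃ = d₂₃`, then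
`a₁ = −d₂₃/d₁₂` and `a₂ = d₁₃/d₁₂`; moreover the endomorphism sending `x₁ ↦ x₁`,
`x₂ ↦ x₂`, `x₃ ↦ −(d₂₃/d₁₂)·x₁ + (d₁₃/d₁₂)·x₂` exists and is not surjective.  In
particular `𝒞𝒮𝒟₃(K)` is not a Dixmier algebra. -/
theorem csd3_not_dixmier (K : Type*) [Field K] [CharZero K]
    (d : Fin 3 → Fin 3 → K) (hd : ∀ i j : Fin 3, i < j → d i j ≠ 0)
    (a1 a2 : K)
    (hc1 : (a1 • csdX K d 0 + a2 • csdX K d 1) * csdX K d 0 -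
        csdX K d 0 * (a1 • csdX K d 0 + a2 • csdX K d 1) =
      algebraMap K (CSD K d) (d 0 2))
    (hc2 : (a1 • csdX K d 0 + a2 • csdX K d 1) * csdX K d 1 -
        csdX K d 1 * (a1 • csdX K d 0 + a2 • csdX K d 1) =
      algebraMap K (CSD K d) (d 1 2)) :
    a1 = -(d 1 2) / d 0 1 ∧ a2 = d 0 2 / d 0 1 ∧
    (∃ φ : CSD K d →ₐ[K] CSD K d,
      φ (csdX K d 0) = csdX K d 0 ∧ φ (csdX K d 1) = csdX K d 1 ∧
      φ (csdX K d 2) = (-(d 1 2 / d 0 1)) • csdX K d 0 + (d 0 2 / d 0 1) • csdX K d 1) ∧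
    (∀ φ : CSD K d →ₐ[K] CSD K d,
      φ (csdX K d 0) = csdX K d 0 → φ (csdX K d 1) = csdX K d 1 →
      φ (csdX K d 2) = (-(d 1 2 / d 0 1)) • csdX K d 0 + (d 0 2 / d 0 1) • csdX K d 1 →
      ¬ Function.Surjective φ) ∧
    ¬ (∀ φ : CSD K d →ₐ[K] CSD K d, Function.Bijective φ) := by
  have h01 : d 0 1 ≠ 0 := hd 0 1 (by decide)
  have hinj := csd_algebraMap_inj d h01
  set x0 := csdX K d 0 with hx0
  set x1 := csdX K d 1 with hx1
  have comm01 : x1 * x0 = x0 * x1 + algebraMap K (CSD K d) (d 0 1) :=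
    csd_comm d (show (0 : Fin 3) < 1 by decide)
  -- compute a2
  have e1 : (a1 • x0 + a2 • x1) * x0 - x0 * (a1 • x0 + a2 • x1) =
      a2 • (x1 * x0) - a2 • (x0 * x1) := by
    simp only [add_mul, mul_add, smul_mul_assoc, mul_smul_comm]
    module
  rw [e1, comm01, smul_add, add_sub_cancel_left, Algebra.smul_def, ← map_mul] at hc1
  have ha2 : a2 = d 0 2 / d 0 1 := by
    rw [eq_div_iff h01]; exact hinj hc1
  -- compute a1
  have e2 : (a1 • x0 + a2 • x1) * x1 - x1 * (a1 • x0 + a2 • x1) =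
      (-a1) • (x1 * x0) - (-a1) • (x0 * x1) := by
    simp only [add_mul, mul_add, smul_mul_assoc, mul_smul_comm, neg_smul]
    module
  rw [e2, comm01, smul_add, add_sub_cancel_left, Algebra.smul_def, ← map_mul] at hc2
  have ha1 : a1 = -(d 1 2) / d 0 1 := by
    rw [eq_div_iff h01]
    have := hinj hc2
    linear_combination -this
  refine ⟨ha1, ha2, csdPhi_exists d h01, fun φ h0 h1 h2 => csdPhi_not_surj d h01 φ h0 h1 h2, ?_⟩
  intro hall
  obtain ⟨φ, p0, p1, p2⟩ := csdPhi_exists d h01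
  exact csdPhi_not_surj d h01 φ p0 p1 p2 (hall φ).2
end
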